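/- arXiv:1906.04318 — 2 statements merged into one kernel-verified Lean document; each statement's English description precedes it below -/
import Mathlib

section
/- Let K be a set of q^2+2q+1 points in PG(4,q), q ≥ 5, such that every 3-space meets K in one of the eight allowed types, and assume there are no 3-spaces meeting K in a conic plus two lines. Then there is no 3-space meeting K in a line together with a twisted cubic. -/
open Projectivization

variable (F : Type) [Field F] [Fintype F]

/-- The points of the projective space `PG(n,q)` over a field `F` (of order `q`). -/
abbrev PGPt (n : ℕ) := Projectivization F (Fin (n + 1) → F)

/-- `S` is a projective subspace of (projective) dimension `d` of `PG(n,q)`. -/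
def IsSubsp (n d : ℕ) (S : Set (PGPt F n)) : Prop :=
  ∃ W : Submodule F (Fin (n + 1) → F), Module.finrank F W = d + 1 ∧
    S = {p | p.submodule ≤ W}

/-- A line of `PG(n,q)`. -/
abbrev IsLine (n : ℕ) (S : Set (PGPt F n)) : Prop := IsSubsp F n 1 S

/-- A plane of `PG(n,q)`. -/
abbrev IsPlane (n : ℕ) (S : Set (PGPt F n)) : Prop := IsSubsp F n 2 S

/-- A 3-space (hyperplane) of `PG(4,q)`. -/
abbrev IsSolid (S : Set (PGPt F 4)) : Prop := IsSubsp F 4 3 S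

/-- A non-degenerate conic of `PG(n,q)` : the image of the standard conic
`{[a² : ab : b²]}` of `PG(2,q)` under an injective linear map. -/
def IsConic (n : ℕ) (C : Set (PGPt F n)) : Prop :=
  ∃ f : (Fin 3 → F) →ₗ[F] (Fin (n + 1) → F), Function.Injective f ∧
    C = {p | ∃ a b : F, (a ≠ 0 ∨ b ≠ 0) ∧
      p.submodule = Submodule.span F {f ![a ^ 2, a * b, b ^ 2]}}

/-- A twisted cubic of `PG(n,q)` : the image of the standard twisted cubic
`{[a³ : a²b : ab² : b³]}` of `PG(3,q)` under an injective linear map. -/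
def IsTwistedCubic (n : ℕ) (C : Set (PGPt F n)) : Prop :=
  ∃ f : (Fin 4 → F) →ₗ[F] (Fin (n + 1) → F), Function.Injective f ∧
    C = {p | ∃ a b : F, (a ≠ 0 ∨ b ≠ 0) ∧
      p.submodule = Submodule.span F {f ![a ^ 3, a ^ 2 * b, a * b ^ 2, b ^ 3]}}

/-- A ruled cubic surface of `PG(4,q)` : the image, under a projective transformation,
of the standard scroll ruling the line `{[a : b : 0 : 0 : 0]}` and the conic
`{[0 : 0 : a² : ab : b²]}` according to a projectivity (normalized to the identity). -/
def IsRuledCubicSurface (K : Set (PGPt F 4)) : Prop :=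
  ∃ g : (Fin 5 → F) ≃ₗ[F] (Fin 5 → F),
    K = {p | ∃ a b s t : F, (a ≠ 0 ∨ b ≠ 0) ∧ (s ≠ 0 ∨ t ≠ 0) ∧
      p.submodule = Submodule.span F {g ![s * a, s * b, t * a ^ 2, t * (a * b), t * b ^ 2]}}

/-- The intersection of the 3-space `Pi` with `K` is one line. -/
def TypeOneLine (K Pi : Set (PGPt F 4)) : Prop :=
  ∃ ℓ, IsLine F 4 ℓ ∧ K ∩ Pi = ℓ

/-- The intersection of the 3-space `Pi` with `K` is two (distinct) lines. -/
def TypeTwoLines (K Pi : Set (PGPt F 4)) : Prop :=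
  ∃ ℓ m, IsLine F 4 ℓ ∧ IsLine F 4 m ∧ ℓ ≠ m ∧ K ∩ Pi = ℓ ∪ m

/-- The intersection of the 3-space `Pi` with `K` is three (distinct) lines. -/
def TypeThreeLines (K Pi : Set (PGPt F 4)) : Prop :=
  ∃ ℓ m n, IsLine F 4 ℓ ∧ IsLine F 4 m ∧ IsLine F 4 n ∧
    ℓ ≠ m ∧ ℓ ≠ n ∧ m ≠ n ∧ K ∩ Pi = ℓ ∪ m ∪ n

/-- The intersection of the 3-space `Pi` with `K` is a line and a non-degenerate conic. -/
def TypeLineConic (K Pi : Set (PGPt F 4)) : Prop :=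
  ∃ ℓ C, IsLine F 4 ℓ ∧ IsConic F 4 C ∧ K ∩ Pi = ℓ ∪ C

/-- The intersection of the 3-space `Pi` with `K` is a twisted cubic. -/
def TypeTwistedCubic (K Pi : Set (PGPt F 4)) : Prop :=
  ∃ C, IsTwistedCubic F 4 C ∧ K ∩ Pi = C

/-- The intersection of the 3-space `Pi` with `K` is a single point. -/
def TypePoint (K Pi : Set (PGPt F 4)) : Prop :=
  ∃ P, K ∩ Pi = {P}

/-- The intersection of the 3-space `Pi` with `K` is a non-degenerate conic and two lines. -/
def TypeConicTwoLines (K Pi : Set (PGPt F 4)) : Prop :=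
  ∃ C ℓ m, IsConic F 4 C ∧ IsLine F 4 ℓ ∧ IsLine F 4 m ∧ ℓ ≠ m ∧ K ∩ Pi = C ∪ ℓ ∪ m

/-- The intersection of the 3-space `Pi` with `K` is a line and a twisted cubic. -/
def TypeLineTwistedCubic (K Pi : Set (PGPt F 4)) : Prop :=
  ∃ ℓ C, IsLine F 4 ℓ ∧ IsTwistedCubic F 4 C ∧ K ∩ Pi = ℓ ∪ C

/-- Every 3-space meets `K` in one, two or three lines, a line and a
non-degenerate conic, or a twisted cubic. -/
def FiveTypeHyp (K : Set (PGPt F 4)) : Prop :=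
  ∀ Pi, IsSolid F Pi →
    TypeOneLine F K Pi ∨ TypeTwoLines F K Pi ∨ TypeThreeLines F K Pi ∨
      TypeLineConic F K Pi ∨ TypeTwistedCubic F K Pi

/-- Every 3-space meets `K` in one of the eight allowed types. -/
def EightTypeHyp (K : Set (PGPt F 4)) : Prop :=
  ∀ Pi, IsSolid F Pi →
    TypeOneLine F K Pi ∨ TypeTwoLines F K Pi ∨ TypeThreeLines F K Pi ∨
      TypeLineConic F K Pi ∨ TypeTwistedCubic F K Pi ∨
      TypePoint F K Pi ∨ TypeConicTwoLines F K Pi ∨ TypeLineTwistedCubic F K Pi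

/-- `m` lists the `q+1` sticks of `K` (pairwise skew lines partitioning `K`) and `b` is
the baseline: a further line of `K` meeting every stick. -/
def SticksAndBase (q : ℕ) (K : Set (PGPt F 4)) (m : Fin (q + 1) → Set (PGPt F 4))
    (b : Set (PGPt F 4)) : Prop :=
  (∀ i, IsLine F 4 (m i)) ∧ (∀ i j, i ≠ j → Disjoint (m i) (m j)) ∧ (⋃ i, m i) = K ∧
    IsLine F 4 b ∧ b ⊆ K ∧ (∀ i, b ≠ m i) ∧ (∀ i, (b ∩ m i).Nonempty)

namespace Stmt13Aux
set_option linter.unusedSectionVars false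
open Submodule Module

variable {F}

instance : Finite (PGPt F 4) := Quotient.finite _

/-- points of a submodule -/
def pts (W : Submodule F (Fin 5 → F)) : Set (PGPt F 4) := {p | p.submodule ≤ W}

lemma mem_pts {W : Submodule F (Fin 5 → F)} {p : PGPt F 4} : p ∈ pts W ↔ p.submodule ≤ W :=
  Iff.rfl

lemma vec_mem_of_le {W : Submodule F (Fin 5 → F)} {p : PGPt F 4} {v : Fin 5 → F}
    (hv : p.submodule = Submodule.span F {v}) (h : p.submodule ≤ W) : v ∈ W :=
  h (hv ▸ Submodule.mem_span_singleton_self v)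

lemma rep_mem_of_le {W : Submodule F (Fin 5 → F)} {p : PGPt F 4}
    (h : p.submodule ≤ W) : p.rep ∈ W :=
  vec_mem_of_le (Projectivization.submodule_eq p) h

lemma span_rep_eq (p : PGPt F 4) : Submodule.span F {p.rep} = p.submodule :=
  (Projectivization.submodule_eq p).symm

lemma eq_of_submodule_eq {p p' : PGPt F 4} (h : p.submodule = p'.submodule) : p = p' :=
  Projectivization.submodule_injective h

lemma mk_mem_pts {W : Submodule F (Fin 5 → F)} {v : Fin 5 → F} (hv : v ≠ 0) (h : v ∈ W) :
    Projectivization.mk F v hv ∈ pts W := by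
  rw [mem_pts, Projectivization.submodule_mk]
  exact Submodule.span_le.2 (by simpa using h)

/-- if all points of W₁ are points of W₂ then W₁ ≤ W₂ -/
lemma le_of_pts_subset {W₁ W₂ : Submodule F (Fin 5 → F)} (h : pts W₁ ⊆ pts W₂) : W₁ ≤ W₂ := by
  intro v hv
  rcases eq_or_ne v 0 with rfl | hv0
  · exact W₂.zero_mem
  · have := h (mk_mem_pts hv0 hv)
    rw [mem_pts, Projectivization.submodule_mk] at this
    exact this (Submodule.mem_span_singleton_self v)

lemma pts_mono {W₁ W₂ : Submodule F (Fin 5 → F)} (h : W₁ ≤ W₂) : pts W₁ ⊆ pts W₂ :=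
  fun _ hp => le_trans hp h

/-- standard twisted cubic parametrization vector -/
def v4 (a b : F) : Fin 4 → F := ![a ^ 3, a ^ 2 * b, a * b ^ 2, b ^ 3]

/-- standard conic parametrization vector -/
def v3 (a b : F) : Fin 3 → F := ![a ^ 2, a * b, b ^ 2]

lemma v4_ne_zero {a b : F} (h : a ≠ 0 ∨ b ≠ 0) : v4 a b ≠ 0 := by
  intro hz
  rcases h with h | h
  · exact h (by have := congrFun hz 0; simpa [v4] using (pow_eq_zero_iff (n := 3) (by norm_num)).1 this)
  · exact h (by have := congrFun hz 3; simpa [v4] using (pow_eq_zero_iff (n := 3) (by norm_num)).1 this)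

lemma v3_ne_zero {a b : F} (h : a ≠ 0 ∨ b ≠ 0) : v3 a b ≠ 0 := by
  intro hz
  rcases h with h | h
  · exact h (by have := congrFun hz 0; simpa [v3] using (pow_eq_zero_iff (n := 2) (by norm_num)).1 this)
  · exact h (by have := congrFun hz 2; simpa [v3] using (pow_eq_zero_iff (n := 2) (by norm_num)).1 this)

lemma pair_prop {a b a' b' : F} (h0 : a ≠ 0 ∨ b ≠ 0) (h0' : a' ≠ 0 ∨ b' ≠ 0)
    (h : a * b' - a' * b = 0) : ∃ l : F, l ≠ 0 ∧ a' = l * a ∧ b' = l * b := by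
  rcases eq_or_ne a 0 with rfl | ha
  · have hb : b ≠ 0 := h0.resolve_left (fun h => h rfl)
    have ha' : a' = 0 := by
      have : a' * b = 0 := by linear_combination -h
      rcases mul_eq_zero.1 this with h' | h'
      · exact h'
      · exact absurd h' hb
    subst ha'
    have hb' : b' ≠ 0 := h0'.resolve_left (fun h => h rfl)
    exact ⟨b' / b, div_ne_zero hb' hb, by ring, by field_simp⟩
  · have ha' : a' ≠ 0 := by
      intro h'
      subst h'
      have : a * b' = 0 := by linear_combination h
      rcases mul_eq_zero.1 this with h' | h'
      · exact absurd h' ha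
      · exact (h0'.resolve_left (fun h => h rfl)) h'
    refine ⟨a' / a, div_ne_zero ha' ha, by field_simp, ?_⟩
    rw [div_mul_eq_mul_div, eq_div_iff ha]
    linear_combination h

lemma v4_smul (l a b : F) : v4 (l * a) (l * b) = l ^ 3 • v4 a b := by
  funext i
  fin_cases i <;> simp [v4] <;> ring

lemma v3_smul (l a b : F) : v3 (l * a) (l * b) = l ^ 2 • v3 a b := by
  funext i
  fin_cases i <;> simp [v3] <;> ring

end Stmt13Aux

namespace Stmt13Aux
set_option linter.unusedSectionVars false
open Submodule Module
variable {F : Type} [Field F] [Fintype F]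

lemma det_v4 (a₁ b₁ a₂ b₂ a₃ b₃ a₄ b₄ : F) :
    (Matrix.of ![v4 a₁ b₁, v4 a₂ b₂, v4 a₃ b₃, v4 a₄ b₄]).det =
    (a₁*b₂ - a₂*b₁) * (a₁*b₃ - a₃*b₁) * (a₁*b₄ - a₄*b₁) *
    ((a₂*b₃ - a₃*b₂) * (a₂*b₄ - a₄*b₂) * (a₃*b₄ - a₄*b₃)) := by
  simp [Matrix.det_succ_row_zero, Fin.sum_univ_succ, Fin.succAbove, v4]
  ring

lemma det_v3 (a₁ b₁ a₂ b₂ a₃ b₃ : F) :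
    (Matrix.of ![v3 a₁ b₁, v3 a₂ b₂, v3 a₃ b₃]).det =
    (a₁*b₂ - a₂*b₁) * (a₁*b₃ - a₃*b₁) * (a₂*b₃ - a₃*b₂) := by
  rw [Matrix.det_fin_three]
  simp [Matrix.of_apply, v3]
  ring

lemma indep_v4 {a₁ b₁ a₂ b₂ a₃ b₃ a₄ b₄ : F}
    (h12 : a₁*b₂ - a₂*b₁ ≠ 0) (h13 : a₁*b₃ - a₃*b₁ ≠ 0) (h14 : a₁*b₄ - a₄*b₁ ≠ 0)
    (h23 : a₂*b₃ - a₃*b₂ ≠ 0) (h24 : a₂*b₄ - a₄*b₂ ≠ 0) (h34 : a₃*b₄ - a₄*b₃ ≠ 0) :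
    LinearIndependent F ![v4 a₁ b₁, v4 a₂ b₂, v4 a₃ b₃, v4 a₄ b₄] := by
  have h : LinearIndependent F
      (fun i => (Matrix.of ![v4 a₁ b₁, v4 a₂ b₂, v4 a₃ b₃, v4 a₄ b₄]) i) := by
    change LinearIndependent F (Matrix.of ![v4 a₁ b₁, v4 a₂ b₂, v4 a₃ b₃, v4 a₄ b₄]).row
    rw [Matrix.linearIndependent_rows_iff_isUnit, Matrix.isUnit_iff_isUnit_det, det_v4]
    exact (mul_ne_zero (mul_ne_zero (mul_ne_zero h12 h13) h14)
      (mul_ne_zero (mul_ne_zero h23 h24) h34)).isUnit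
  exact h

lemma indep_v3 {a₁ b₁ a₂ b₂ a₃ b₃ : F}
    (h12 : a₁*b₂ - a₂*b₁ ≠ 0) (h13 : a₁*b₃ - a₃*b₁ ≠ 0) (h23 : a₂*b₃ - a₃*b₂ ≠ 0) :
    LinearIndependent F ![v3 a₁ b₁, v3 a₂ b₂, v3 a₃ b₃] := by
  have h : LinearIndependent F
      (fun i => (Matrix.of ![v3 a₁ b₁, v3 a₂ b₂, v3 a₃ b₃]) i) := by
    change LinearIndependent F (Matrix.of ![v3 a₁ b₁, v3 a₂ b₂, v3 a₃ b₃]).row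
    rw [Matrix.linearIndependent_rows_iff_isUnit, Matrix.isUnit_iff_isUnit_det, det_v3]
    exact (mul_ne_zero (mul_ne_zero h12 h13) h23).isUnit
  exact h

lemma exists_fourth_param (x y z : F) (hq : 5 ≤ Fintype.card F) :
    ∃ c : F, c ≠ x ∧ c ≠ y ∧ c ≠ z := by
  classical
  have h1 : (({x, y, z} : Finset F)ᶜ).Nonempty := by
    apply Finset.card_pos.1
    rw [Finset.card_compl]
    have h3 : ({x, y, z} : Finset F).card ≤ 3 :=
      (Finset.card_insert_le _ _).trans (by
        simpa using Nat.add_le_add_right (Finset.card_insert_le y ({z} : Finset F)) 1)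
    omega
  obtain ⟨c, hc⟩ := h1
  rw [Finset.mem_compl, Finset.mem_insert, Finset.mem_insert, Finset.mem_singleton] at hc
  push_neg at hc
  exact ⟨c, hc.1, hc.2.1, hc.2.2⟩

lemma indep_v4_three {a₁ b₁ a₂ b₂ a₃ b₃ : F}
    (h01 : a₁ ≠ 0 ∨ b₁ ≠ 0) (h02 : a₂ ≠ 0 ∨ b₂ ≠ 0) (h03 : a₃ ≠ 0 ∨ b₃ ≠ 0)
    (h12 : a₁*b₂ - a₂*b₁ ≠ 0) (h13 : a₁*b₃ - a₃*b₁ ≠ 0) (h23 : a₂*b₃ - a₃*b₂ ≠ 0)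
    (hq : 5 ≤ Fintype.card F) :
    LinearIndependent F ![v4 a₁ b₁, v4 a₂ b₂, v4 a₃ b₃] := by
  classical
  -- choose c avoiding the three "slopes"
  obtain ⟨c, hc1, hc2, hc3⟩ := exists_fourth_param (b₁ * a₁⁻¹) (b₂ * a₂⁻¹) (b₃ * a₃⁻¹) hq
  have key : ∀ (a b : F), a ≠ 0 ∨ b ≠ 0 → c ≠ b * a⁻¹ → a * c - 1 * b ≠ 0 := by
    intro a b h0 hc h
    rcases eq_or_ne a 0 with rfl | ha
    · have hb : b ≠ 0 := h0.resolve_left (fun h => h rfl)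
      apply hb; linear_combination -h
    · apply hc
      field_simp
      linear_combination h
  have h4 : LinearIndependent F ![v4 a₁ b₁, v4 a₂ b₂, v4 a₃ b₃, v4 1 c] :=
    indep_v4 h12 h13 (key a₁ b₁ h01 hc1) h23 (key a₂ b₂ h02 hc2) (key a₃ b₃ h03 hc3)
  have h3 := h4.comp (Fin.castSucc) (Fin.castSucc_injective 3)
  have e : (![v4 a₁ b₁, v4 a₂ b₂, v4 a₃ b₃, v4 1 c] ∘ Fin.castSucc) =
      ![v4 a₁ b₁, v4 a₂ b₂, v4 a₃ b₃] := by
    funext i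
    fin_cases i <;> rfl
  rwa [e] at h3

/-- mapping independent families through an injective linear map -/
lemma indep_map {m k : ℕ} {f : (Fin m → F) →ₗ[F] (Fin 5 → F)} (hf : Function.Injective f)
    {v : Fin k → Fin m → F} (h : LinearIndependent F v) :
    LinearIndependent F (fun i => f (v i)) :=
  h.map' f (LinearMap.ker_eq_bot.2 hf)

lemma card_le_finrank_of_indep {k : ℕ} {W : Submodule F (Fin 5 → F)} {w : Fin k → Fin 5 → F}
    (hw : ∀ i, w i ∈ W) (h : LinearIndependent F w) : k ≤ Module.finrank F W := by
  have h1 : Submodule.span F (Set.range w) ≤ W := Submodule.span_le.2 (Set.range_subset_iff.2 hw)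
  have h2 : Module.finrank F (Submodule.span F (Set.range w)) = k := by
    rw [finrank_span_eq_card h, Fintype.card_fin]
  rw [← h2]
  exact Submodule.finrank_mono h1

end Stmt13Aux

namespace Stmt13Aux
set_option linter.unusedSectionVars false
open Submodule Module
variable {F : Type} [Field F] [Fintype F]

/-- the standard cubic set determined by `f` -/
def cubicSet (f : (Fin 4 → F) →ₗ[F] (Fin 5 → F)) : Set (PGPt F 4) :=
  {p | ∃ a b : F, (a ≠ 0 ∨ b ≠ 0) ∧
      p.submodule = Submodule.span F {f ![a ^ 3, a ^ 2 * b, a * b ^ 2, b ^ 3]}}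

/-- the standard conic set determined by `f` -/
def conicSet (f : (Fin 3 → F) →ₗ[F] (Fin 5 → F)) : Set (PGPt F 4) :=
  {p | ∃ a b : F, (a ≠ 0 ∨ b ≠ 0) ∧
      p.submodule = Submodule.span F {f ![a ^ 2, a * b, b ^ 2]}}

lemma cubic_param_nonprop {f : (Fin 4 → F) →ₗ[F] (Fin 5 → F)}
    {p p' : PGPt F 4} {a b a' b' : F} (h0 : a ≠ 0 ∨ b ≠ 0) (h0' : a' ≠ 0 ∨ b' ≠ 0)
    (hp : p.submodule = Submodule.span F {f (v4 a b)})
    (hp' : p'.submodule = Submodule.span F {f (v4 a' b')})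
    (hne : p ≠ p') : a * b' - a' * b ≠ 0 := by
  intro h
  obtain ⟨l, hl, ha', hb'⟩ := pair_prop h0 h0' h
  apply hne
  apply eq_of_submodule_eq
  rw [hp, hp', ha', hb', v4_smul, map_smul,
    Submodule.span_singleton_smul_eq (IsUnit.mk0 _ (pow_ne_zero 3 hl)) _]

lemma conic_param_nonprop {f : (Fin 3 → F) →ₗ[F] (Fin 5 → F)}
    {p p' : PGPt F 4} {a b a' b' : F} (h0 : a ≠ 0 ∨ b ≠ 0) (h0' : a' ≠ 0 ∨ b' ≠ 0)
    (hp : p.submodule = Submodule.span F {f (v3 a b)})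
    (hp' : p'.submodule = Submodule.span F {f (v3 a' b')})
    (hne : p ≠ p') : a * b' - a' * b ≠ 0 := by
  intro h
  obtain ⟨l, hl, ha', hb'⟩ := pair_prop h0 h0' h
  apply hne
  apply eq_of_submodule_eq
  rw [hp, hp', ha', hb', v3_smul, map_smul,
    Submodule.span_singleton_smul_eq (IsUnit.mk0 _ (pow_ne_zero 2 hl)) _]

/-- three distinct points of a cubic with submodules inside `W` force `3 ≤ finrank W` -/
lemma three_cubic_le_finrank {f : (Fin 4 → F) →ₗ[F] (Fin 5 → F)} (hf : Function.Injective f)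
    {W : Submodule F (Fin 5 → F)} {p₁ p₂ p₃ : PGPt F 4}
    (h1 : p₁ ∈ cubicSet f) (h2 : p₂ ∈ cubicSet f) (h3 : p₃ ∈ cubicSet f)
    (h12 : p₁ ≠ p₂) (h13 : p₁ ≠ p₃) (h23 : p₂ ≠ p₃)
    (hW1 : p₁.submodule ≤ W) (hW2 : p₂.submodule ≤ W) (hW3 : p₃.submodule ≤ W)
    (hq : 5 ≤ Fintype.card F) : 3 ≤ Module.finrank F W := by
  obtain ⟨a₁, b₁, h01, hp1⟩ := h1
  obtain ⟨a₂, b₂, h02, hp2⟩ := h2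
  obtain ⟨a₃, b₃, h03, hp3⟩ := h3
  have li : LinearIndependent F ![v4 a₁ b₁, v4 a₂ b₂, v4 a₃ b₃] :=
    indep_v4_three h01 h02 h03
      (cubic_param_nonprop h01 h02 hp1 hp2 h12)
      (cubic_param_nonprop h01 h03 hp1 hp3 h13)
      (cubic_param_nonprop h02 h03 hp2 hp3 h23) hq
  have li2 : LinearIndependent F
      (fun i => f (![v4 a₁ b₁, v4 a₂ b₂, v4 a₃ b₃] i)) := indep_map hf li
  apply card_le_finrank_of_indep (w := fun i => f (![v4 a₁ b₁, v4 a₂ b₂, v4 a₃ b₃] i)) _ li2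
  intro i
  fin_cases i
  · exact vec_mem_of_le hp1 hW1
  · exact vec_mem_of_le hp2 hW2
  · exact vec_mem_of_le hp3 hW3

/-- four distinct points of a cubic with submodules inside `W` force `4 ≤ finrank W` -/
lemma four_cubic_le_finrank {f : (Fin 4 → F) →ₗ[F] (Fin 5 → F)} (hf : Function.Injective f)
    {W : Submodule F (Fin 5 → F)} {p₁ p₂ p₃ p₄ : PGPt F 4}
    (h1 : p₁ ∈ cubicSet f) (h2 : p₂ ∈ cubicSet f) (h3 : p₃ ∈ cubicSet f) (h4 : p₄ ∈ cubicSet f)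
    (h12 : p₁ ≠ p₂) (h13 : p₁ ≠ p₃) (h14 : p₁ ≠ p₄)
    (h23 : p₂ ≠ p₃) (h24 : p₂ ≠ p₄) (h34 : p₃ ≠ p₄)
    (hW1 : p₁.submodule ≤ W) (hW2 : p₂.submodule ≤ W) (hW3 : p₃.submodule ≤ W)
    (hW4 : p₄.submodule ≤ W) : 4 ≤ Module.finrank F W := by
  obtain ⟨a₁, b₁, h01, hp1⟩ := h1
  obtain ⟨a₂, b₂, h02, hp2⟩ := h2
  obtain ⟨a₃, b₃, h03, hp3⟩ := h3
  obtain ⟨a₄, b₄, h04, hp4⟩ := h4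
  have li : LinearIndependent F ![v4 a₁ b₁, v4 a₂ b₂, v4 a₃ b₃, v4 a₄ b₄] :=
    indep_v4 (cubic_param_nonprop h01 h02 hp1 hp2 h12)
      (cubic_param_nonprop h01 h03 hp1 hp3 h13)
      (cubic_param_nonprop h01 h04 hp1 hp4 h14)
      (cubic_param_nonprop h02 h03 hp2 hp3 h23)
      (cubic_param_nonprop h02 h04 hp2 hp4 h24)
      (cubic_param_nonprop h03 h04 hp3 hp4 h34)
  have li2 : LinearIndependent F
      (fun i => f (![v4 a₁ b₁, v4 a₂ b₂, v4 a₃ b₃, v4 a₄ b₄] i)) := indep_map hf li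
  apply card_le_finrank_of_indep (w := fun i => f (![v4 a₁ b₁, v4 a₂ b₂, v4 a₃ b₃, v4 a₄ b₄] i)) _ li2
  intro i
  fin_cases i
  · exact vec_mem_of_le hp1 hW1
  · exact vec_mem_of_le hp2 hW2
  · exact vec_mem_of_le hp3 hW3
  · exact vec_mem_of_le hp4 hW4

lemma cubic_inter_le_two {f : (Fin 4 → F) →ₗ[F] (Fin 5 → F)} (hf : Function.Injective f)
    {W : Submodule F (Fin 5 → F)} (hW : Module.finrank F W = 2) (hq : 5 ≤ Fintype.card F) :
    (cubicSet f ∩ pts W).ncard ≤ 2 := by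
  by_contra h
  push_neg at h
  obtain ⟨p₁, hm1, p₂, hm2, p₃, hm3, h12, h13, h23⟩ := (Set.two_lt_ncard (Set.toFinite _)).1 h
  have := three_cubic_le_finrank hf hm1.1 hm2.1 hm3.1 h12 h13 h23 hm1.2 hm2.2 hm3.2 hq
  omega

lemma cubic_inter_le_three {f : (Fin 4 → F) →ₗ[F] (Fin 5 → F)} (hf : Function.Injective f)
    {W : Submodule F (Fin 5 → F)} (hW : Module.finrank F W = 3) :
    (cubicSet f ∩ pts W).ncard ≤ 3 := by
  by_contra h
  push_neg at h
  set s := cubicSet f ∩ pts W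
  have hne : s.Nonempty := by
    rw [← Set.ncard_pos (Set.toFinite _)]; omega
  obtain ⟨p₁, hp1⟩ := hne
  have h3 : 2 < (s \ {p₁}).ncard := by
    rw [Set.ncard_diff_singleton_of_mem hp1]; omega
  obtain ⟨p₂, hm2, p₃, hm3, p₄, hm4, h23, h24, h34⟩ := (Set.two_lt_ncard (Set.toFinite _)).1 h3
  have h12 : p₁ ≠ p₂ := fun h => hm2.2 (by simp [← h])
  have h13 : p₁ ≠ p₃ := fun h => hm3.2 (by simp [← h])
  have h14 : p₁ ≠ p₄ := fun h => hm4.2 (by simp [← h])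
  have hm2' := hm2.1; have hm3' := hm3.1; have hm4' := hm4.1
  have := four_cubic_le_finrank hf hp1.1 hm2'.1 hm3'.1 hm4'.1 h12 h13 h14 h23 h24 h34
    hp1.2 hm2'.2 hm3'.2 hm4'.2
  omega

end Stmt13Aux

namespace Stmt13Aux
set_option linter.unusedSectionVars false
open Submodule Module
variable {F : Type} [Field F] [Fintype F]

lemma finrank_V5 : Module.finrank F (Fin 5 → F) = 5 := by
  simp [Module.finrank_pi]

lemma finrank_V4 : Module.finrank F (Fin 4 → F) = 4 := by
  simp [Module.finrank_pi]

lemma finrank_V3 : Module.finrank F (Fin 3 → F) = 3 := by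
  simp [Module.finrank_pi]

lemma conic_subset_of_three {f : (Fin 3 → F) →ₗ[F] (Fin 5 → F)} (hf : Function.Injective f)
    {W : Submodule F (Fin 5 → F)} (hW : Module.finrank F W = 3)
    {p₁ p₂ p₃ : PGPt F 4} (h1 : p₁ ∈ conicSet f) (h2 : p₂ ∈ conicSet f) (h3 : p₃ ∈ conicSet f)
    (h12 : p₁ ≠ p₂) (h13 : p₁ ≠ p₃) (h23 : p₂ ≠ p₃)
    (hW1 : p₁.submodule ≤ W) (hW2 : p₂.submodule ≤ W) (hW3 : p₃.submodule ≤ W) :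
    conicSet f ⊆ pts W := by
  obtain ⟨a₁, b₁, h01, hp1⟩ := h1
  obtain ⟨a₂, b₂, h02, hp2⟩ := h2
  obtain ⟨a₃, b₃, h03, hp3⟩ := h3
  have li : LinearIndependent F ![v3 a₁ b₁, v3 a₂ b₂, v3 a₃ b₃] :=
    indep_v3 (conic_param_nonprop h01 h02 hp1 hp2 h12)
      (conic_param_nonprop h01 h03 hp1 hp3 h13)
      (conic_param_nonprop h02 h03 hp2 hp3 h23)
  set w : Fin 3 → (Fin 5 → F) := fun i => f (![v3 a₁ b₁, v3 a₂ b₂, v3 a₃ b₃] i) with hw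
  have li2 : LinearIndependent F w := indep_map hf li
  have hspan3 : Module.finrank F (Submodule.span F (Set.range w)) = 3 := by
    rw [finrank_span_eq_card li2, Fintype.card_fin]
  have hsubW : Submodule.span F (Set.range w) ≤ W := by
    apply Submodule.span_le.2 (Set.range_subset_iff.2 _)
    intro i
    fin_cases i
    · exact vec_mem_of_le hp1 hW1
    · exact vec_mem_of_le hp2 hW2
    · exact vec_mem_of_le hp3 hW3
  have heqW : Submodule.span F (Set.range w) = W :=
    Submodule.eq_of_le_of_finrank_le hsubW (by omega)
  have hsubR : Submodule.span F (Set.range w) ≤ LinearMap.range f :=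
    Submodule.span_le.2 (Set.range_subset_iff.2 (fun i => ⟨_, rfl⟩))
  have hR : Module.finrank F (LinearMap.range f) = 3 := by
    rw [LinearMap.finrank_range_of_inj hf, finrank_V3]
  have heqR : Submodule.span F (Set.range w) = LinearMap.range f :=
    Submodule.eq_of_le_of_finrank_le hsubR (by omega)
  intro p hp
  obtain ⟨a, b, h0, hps⟩ := hp
  rw [mem_pts, hps]
  have hmem : f ![a ^ 2, a * b, b ^ 2] ∈ W := by
    rw [← heqW, heqR]
    exact ⟨_, rfl⟩
  exact Submodule.span_le.2 (by simpa using hmem)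

/-- a 2-dimensional subspace has at least `q+1` points -/
lemma pts_ncard_ge {W : Submodule F (Fin 5 → F)} (hW : Module.finrank F W = 2) :
    Fintype.card F + 1 ≤ (pts W).ncard := by
  classical
  have bW : Basis (Fin 2) F W := Module.finBasisOfFinrankEq F W hW
  set u : Fin 5 → F := ((bW 0 : W) : Fin 5 → F) with hu
  set w : Fin 5 → F := ((bW 1 : W) : Fin 5 → F) with hww
  have li : LinearIndependent F (fun i => ((bW i : W) : Fin 5 → F)) :=
    bW.linearIndependent.map' W.subtype (Submodule.ker_subtype W)
  have key : ∀ s t : F, s • u + t • w = 0 → s = 0 ∧ t = 0 := by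
    intro s t hst
    have h0 := Fintype.linearIndependent_iff.1 li ![s, t] (by
      rw [Fin.sum_univ_succ, Fin.sum_univ_succ, Fin.sum_univ_zero]
      show s • u + (t • w + 0) = 0
      rw [add_zero]; exact hst)
    exact ⟨h0 0, h0 1⟩
  have hwne : w ≠ 0 := by
    intro h
    have := (key 0 1 (by simp [h])).2
    norm_num at this
  have humem : u ∈ W := (bW 0).2
  have hwmem : w ∈ W := (bW 1).2
  have hvne : ∀ c : F, u + c • w ≠ 0 := by
    intro c h
    have := (key 1 c (by simpa using h)).1
    norm_num at this
  set φ : Option F → PGPt F 4 := fun o =>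
    Option.elim o (Projectivization.mk F w hwne) (fun c => Projectivization.mk F (u + c • w) (hvne c))
  have hinj : Function.Injective φ := by
    intro o₁ o₂ he
    match o₁, o₂ with
    | Option.none, Option.none => rfl
    | Option.none, Option.some c =>
      exfalso
      rw [show φ Option.none = Projectivization.mk F w hwne from rfl,
        show φ (Option.some c) = Projectivization.mk F (u + c • w) (hvne c) from rfl,
        Projectivization.mk_eq_mk_iff'] at he
      obtain ⟨a, ha⟩ := he
      have h2 : (-a) • u + (1 - a * c) • w = 0 := by
        have e : w - a • (u + c • w) = (-a) • u + (1 - a * c) • w := by module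
        rw [← e, ha, sub_self]
      have := key _ _ h2
      have ha0 : a = 0 := by have := this.1; simpa using this
      rw [ha0] at this
      simpa using this.2
    | Option.some c, Option.none =>
      exfalso
      rw [show φ Option.none = Projectivization.mk F w hwne from rfl,
        show φ (Option.some c) = Projectivization.mk F (u + c • w) (hvne c) from rfl,
        Projectivization.mk_eq_mk_iff'] at he
      obtain ⟨a, ha⟩ := he
      have h2 : (1 : F) • u + (c - a) • w = 0 := by
        have e : (u + c • w) - a • w = (1 : F) • u + (c - a) • w := by module
        rw [← e, ← ha, sub_self]
      have := (key _ _ h2).1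
      norm_num at this
    | Option.some c, Option.some c' =>
      rw [show φ (Option.some c) = Projectivization.mk F (u + c • w) (hvne c) from rfl,
        show φ (Option.some c') = Projectivization.mk F (u + c' • w) (hvne c') from rfl,
        Projectivization.mk_eq_mk_iff'] at he
      obtain ⟨a, ha⟩ := he
      have h2 : (a - 1) • u + (a * c' - c) • w = 0 := by
        have e : a • (u + c' • w) - (u + c • w) = (a - 1) • u + (a * c' - c) • w := by module
        rw [← e, ha, sub_self]
      have h3 := key _ _ h2
      have ha1 : a = 1 := by have := h3.1; linear_combination this
      have : c' = c := by have := h3.2; rw [ha1] at this; linear_combination this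
      rw [this]
  have hsub : Set.range φ ⊆ pts W := by
    rintro p ⟨o, rfl⟩
    match o with
    | Option.none => exact mk_mem_pts hwne hwmem
    | Option.some c => exact mk_mem_pts (hvne c) (W.add_mem humem (W.smul_mem c hwmem))
  calc Fintype.card F + 1 = Nat.card (Option F) := by
        simp [Nat.card_eq_fintype_card]
    _ = (Set.range φ).ncard := by
        rw [← Nat.card_range_of_injective hinj, Nat.card_coe_set_eq]
    _ ≤ (pts W).ncard := Set.ncard_le_ncard hsub (Set.toFinite _)

end Stmt13Aux

namespace Stmt13Aux
set_option linter.unusedSectionVars false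
open Submodule Module
variable {F : Type} [Field F] [Fintype F]

lemma f_ne_zero {m : ℕ} {f : (Fin m → F) →ₗ[F] (Fin 5 → F)} (hf : Function.Injective f)
    {x : Fin m → F} (hx : x ≠ 0) : f x ≠ 0 := by
  intro h
  exact hx (hf (h.trans (map_zero f).symm))

lemma cubic_ncard_ge {f : (Fin 4 → F) →ₗ[F] (Fin 5 → F)} (hf : Function.Injective f) :
    Fintype.card F + 1 ≤ (cubicSet f).ncard := by
  classical
  have hno : ∀ c : F, v4 1 c ≠ 0 := fun c => v4_ne_zero (Or.inl one_ne_zero)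
  have hni : v4 (0 : F) 1 ≠ 0 := v4_ne_zero (Or.inr one_ne_zero)
  set φ : Option F → PGPt F 4 := fun o =>
    Option.elim o (Projectivization.mk F (f (v4 0 1)) (f_ne_zero hf hni))
      (fun c => Projectivization.mk F (f (v4 1 c)) (f_ne_zero hf (hno c)))
  have hinj : Function.Injective φ := by
    intro o₁ o₂ he
    match o₁, o₂ with
    | Option.none, Option.none => rfl
    | Option.none, Option.some c =>
      exfalso
      simp only [φ, Option.elim] at he
      rw [Projectivization.mk_eq_mk_iff'] at he
      obtain ⟨a, ha⟩ := he
      rw [← map_smul, ] at ha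
      have := hf ha
      have h0 := congrFun this 0
      simp [v4] at h0
      have h3 := congrFun this 3
      rw [h0] at h3
      simp [v4] at h3
    | Option.some c, Option.none =>
      exfalso
      simp only [φ, Option.elim] at he
      rw [Projectivization.mk_eq_mk_iff'] at he
      obtain ⟨a, ha⟩ := he
      rw [← map_smul] at ha
      have := hf ha
      have h0 := congrFun this 0
      simp [v4] at h0
    | Option.some c, Option.some c' =>
      simp only [φ, Option.elim] at he
      rw [Projectivization.mk_eq_mk_iff'] at he
      obtain ⟨a, ha⟩ := he
      rw [← map_smul] at ha
      have h2 := hf ha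
      have h0 := congrFun h2 0
      have h1 := congrFun h2 1
      simp [v4] at h0 h1
      rw [h0] at h1
      simp at h1
      rw [h1]
  have hsub : Set.range φ ⊆ cubicSet f := by
    rintro p ⟨o, rfl⟩
    match o with
    | Option.none =>
      exact ⟨0, 1, Or.inr one_ne_zero, by
        show (Projectivization.mk F _ _).submodule = _
        rw [Projectivization.submodule_mk]; rfl⟩
    | Option.some c =>
      exact ⟨1, c, Or.inl one_ne_zero, by
        show (Projectivization.mk F _ _).submodule = _
        rw [Projectivization.submodule_mk]; rfl⟩
  calc Fintype.card F + 1 = Nat.card (Option F) := by simp [Nat.card_eq_fintype_card]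
    _ = (Set.range φ).ncard := by
        rw [← Nat.card_range_of_injective hinj, Nat.card_coe_set_eq]
    _ ≤ (cubicSet f).ncard := Set.ncard_le_ncard hsub (Set.toFinite _)

lemma conic_ncard_ge {f : (Fin 3 → F) →ₗ[F] (Fin 5 → F)} (hf : Function.Injective f) :
    Fintype.card F + 1 ≤ (conicSet f).ncard := by
  classical
  have hno : ∀ c : F, v3 1 c ≠ 0 := fun c => v3_ne_zero (Or.inl one_ne_zero)
  have hni : v3 (0 : F) 1 ≠ 0 := v3_ne_zero (Or.inr one_ne_zero)
  set φ : Option F → PGPt F 4 := fun o =>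
    Option.elim o (Projectivization.mk F (f (v3 0 1)) (f_ne_zero hf hni))
      (fun c => Projectivization.mk F (f (v3 1 c)) (f_ne_zero hf (hno c)))
  have hinj : Function.Injective φ := by
    intro o₁ o₂ he
    match o₁, o₂ with
    | Option.none, Option.none => rfl
    | Option.none, Option.some c =>
      exfalso
      simp only [φ, Option.elim] at he
      rw [Projectivization.mk_eq_mk_iff'] at he
      obtain ⟨a, ha⟩ := he
      rw [← map_smul] at ha
      have := hf ha
      have h0 := congrFun this 0
      simp [v3] at h0
      have h3 := congrFun this 2
      rw [h0] at h3
      simp [v3] at h3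
    | Option.some c, Option.none =>
      exfalso
      simp only [φ, Option.elim] at he
      rw [Projectivization.mk_eq_mk_iff'] at he
      obtain ⟨a, ha⟩ := he
      rw [← map_smul] at ha
      have := hf ha
      have h0 := congrFun this 0
      simp [v3] at h0
    | Option.some c, Option.some c' =>
      simp only [φ, Option.elim] at he
      rw [Projectivization.mk_eq_mk_iff'] at he
      obtain ⟨a, ha⟩ := he
      rw [← map_smul] at ha
      have h2 := hf ha
      have h0 := congrFun h2 0
      have h1 := congrFun h2 1
      simp [v3] at h0 h1
      rw [h0] at h1
      simp at h1
      rw [h1]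
  have hsub : Set.range φ ⊆ conicSet f := by
    rintro p ⟨o, rfl⟩
    match o with
    | Option.none =>
      exact ⟨0, 1, Or.inr one_ne_zero, by
        show (Projectivization.mk F _ _).submodule = _
        rw [Projectivization.submodule_mk]; rfl⟩
    | Option.some c =>
      exact ⟨1, c, Or.inl one_ne_zero, by
        show (Projectivization.mk F _ _).submodule = _
        rw [Projectivization.submodule_mk]; rfl⟩
  calc Fintype.card F + 1 = Nat.card (Option F) := by simp [Nat.card_eq_fintype_card]
    _ = (Set.range φ).ncard := by
        rw [← Nat.card_range_of_injective hinj, Nat.card_coe_set_eq]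
    _ ≤ (conicSet f).ncard := Set.ncard_le_ncard hsub (Set.toFinite _)

end Stmt13Aux

namespace Stmt13Aux
set_option linter.unusedSectionVars false
open Submodule Module
variable {F : Type} [Field F] [Fintype F]

/-- a line (2-dim subspace) containing two distinct points of `pts W` is inside `W` -/
lemma line_le {L W : Submodule F (Fin 5 → F)} (hL : Module.finrank F L = 2)
    {p p' : PGPt F 4} (hp : p.submodule ≤ L) (hp' : p'.submodule ≤ L) (hne : p ≠ p')
    (hpW : p.submodule ≤ W) (hp'W : p'.submodule ≤ W) : L ≤ W := by
  set u := p.rep with hu0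
  set u' := p'.rep with hu1
  have hu : u ∈ L := rep_mem_of_le hp
  have hu' : u' ∈ L := rep_mem_of_le hp'
  have huW : u ∈ W := rep_mem_of_le hpW
  have hu'W : u' ∈ W := rep_mem_of_le hp'W
  have li : LinearIndependent F ![u, u'] := by
    rw [LinearIndependent.pair_iff' (Projectivization.rep_nonzero p)]
    intro a ha
    apply hne
    apply eq_of_submodule_eq
    have hane : a ≠ 0 := by
      intro h
      rw [h, zero_smul] at ha
      exact Projectivization.rep_nonzero p' ha.symm
    rw [← span_rep_eq p, ← span_rep_eq p', ← hu0, ← hu1, ← ha,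
      Submodule.span_singleton_smul_eq (IsUnit.mk0 a hane) _]
  have hr : Set.range ![u, u'] = {u, u'} := by
    ext x
    constructor
    · rintro ⟨i, rfl⟩
      fin_cases i <;> simp
    · rintro (rfl | rfl)
      · exact ⟨0, rfl⟩
      · exact ⟨1, rfl⟩
  have hsp : Submodule.span F {u, u'} ≤ L := by
    apply Submodule.span_le.2
    rintro x (rfl | rfl) <;> assumption
  have hfr : Module.finrank F (Submodule.span F {u, u'}) = 2 := by
    rw [← hr, finrank_span_eq_card li, Fintype.card_fin]
  have heq : Submodule.span F {u, u'} = L :=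
    Submodule.eq_of_le_of_finrank_le hsp (by rw [hfr, hL])
  rw [← heq]
  apply Submodule.span_le.2
  rintro x (rfl | rfl) <;> assumption

lemma inter_line_le_one {W₀ : Submodule F (Fin 5 → F)} {S Q L : Set (PGPt F 4)}
    (hL : IsLine F 4 L) (hQ : Q ⊆ pts W₀) (hQ4 : Q.ncard ≤ 4)
    (hsub : L ⊆ S) (hSQ : S ∩ pts W₀ ⊆ Q) (hq : 5 ≤ Fintype.card F) :
    (Q ∩ L).ncard ≤ 1 := by
  rw [Set.ncard_le_one (Set.toFinite _)]
  intro a ha b hb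
  by_contra hne
  obtain ⟨WL, hWL2, hLeq⟩ := hL
  subst hLeq
  have ha' : a.submodule ≤ WL := ha.2
  have hb' : b.submodule ≤ WL := hb.2
  have hLW : WL ≤ W₀ := line_le hWL2 ha' hb' hne (hQ ha.1) (hQ hb.1)
  have hLsub : {p : PGPt F 4 | p.submodule ≤ WL} ⊆ Q := fun p hp =>
    hSQ ⟨hsub hp, le_trans hp hLW⟩
  have h1 : Fintype.card F + 1 ≤ ({p : PGPt F 4 | p.submodule ≤ WL}).ncard :=
    pts_ncard_ge hWL2
  have h2 : ({p : PGPt F 4 | p.submodule ≤ WL}).ncard ≤ 4 :=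
    le_trans (Set.ncard_le_ncard hLsub (Set.toFinite _)) hQ4
  omega

lemma exists_not_mem_of_finrank_lt {W : Submodule F (Fin 5 → F)} (h : Module.finrank F W < 5) :
    ∃ w, w ∉ W := by
  by_contra h'
  push_neg at h'
  have hT : W = ⊤ := eq_top_iff.2 fun x _ => h' x
  rw [hT] at h
  rw [finrank_top, finrank_V5] at h
  omega

section solids
variable {Wτ WPi : Submodule F (Fin 5 → F)} {u w : Fin 5 → F}

lemma Wc_ne_zero (hu : u ∈ WPi) (hw : w ∉ WPi) (c : F) : w + c • u ≠ 0 := by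
  intro h
  apply hw
  have : w = -(c • u) := by linear_combination (norm := module) h
  rw [this]
  exact WPi.neg_mem (WPi.smul_mem c hu)

lemma Wc_finrank (hτ3 : Module.finrank F Wτ = 3) (hu : u ∈ WPi) (hw : w ∉ WPi)
    (htPi : Wτ ≤ WPi) (c : F) :
    Module.finrank F ↥(Wτ ⊔ Submodule.span F {w + c • u}) = 4 := by
  have hx0 : w + c • u ≠ 0 := Wc_ne_zero hu hw c
  have hinf : Wτ ⊓ Submodule.span F {w + c • u} = ⊥ := by
    rw [eq_bot_iff]
    rintro y hy
    obtain ⟨hy1, hy2⟩ := Submodule.mem_inf.1 hy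
    obtain ⟨a, rfl⟩ := Submodule.mem_span_singleton.1 hy2
    rcases eq_or_ne a 0 with rfl | ha
    · simp
    · exfalso
      apply hw
      have hmem : w + c • u ∈ Wτ := (Submodule.smul_mem_iff _ ha).1 hy1
      have : w = (w + c • u) - c • u := by module
      rw [this]
      exact WPi.sub_mem (htPi hmem) (WPi.smul_mem c hu)
  have hkey := Submodule.finrank_sup_add_finrank_inf_eq Wτ (Submodule.span F {w + c • u})
  rw [hinf, finrank_bot, finrank_span_singleton hx0, hτ3] at hkey
  omega

lemma Wc_ne (hu : u ∈ WPi) (hw : w ∉ WPi) (htPi : Wτ ≤ WPi) (c : F) :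
    Wτ ⊔ Submodule.span F {w + c • u} ≠ WPi := by
  intro h
  apply hw
  have h1 : w + c • u ∈ WPi := h ▸ Submodule.mem_sup_right (Submodule.mem_span_singleton_self _)
  have : w = (w + c • u) - c • u := by module
  rw [this]
  exact WPi.sub_mem h1 (WPi.smul_mem c hu)

lemma Wc_inter_Pi (hu : u ∈ WPi) (huτ : u ∉ Wτ) (hw : w ∉ WPi) (htPi : Wτ ≤ WPi) (c : F) :
    (Wτ ⊔ Submodule.span F {w + c • u}) ⊓ WPi ≤ Wτ := by
  rintro y hy
  obtain ⟨hy1, hy2⟩ := Submodule.mem_inf.1 hy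
  obtain ⟨t, ht, z, hz, rfl⟩ := Submodule.mem_sup.1 hy1
  obtain ⟨a, rfl⟩ := Submodule.mem_span_singleton.1 hz
  rcases eq_or_ne a 0 with rfl | ha
  · simpa using ht
  · exfalso
    apply hw
    have h1 : a • w = (t + a • (w + c • u)) - t - (a * c) • u := by module
    have h2 : a • w ∈ WPi := by
      rw [h1]
      exact WPi.sub_mem (WPi.sub_mem hy2 (htPi ht)) (WPi.smul_mem _ hu)
    exact (Submodule.smul_mem_iff _ ha).1 h2

lemma Wc_inter_Wc (hu : u ∈ WPi) (huτ : u ∉ Wτ) (hw : w ∉ WPi) (htPi : Wτ ≤ WPi)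
    {c c' : F} (hcc : c ≠ c') :
    (Wτ ⊔ Submodule.span F {w + c • u}) ⊓ (Wτ ⊔ Submodule.span F {w + c' • u}) ≤ Wτ := by
  rintro y hy
  obtain ⟨hy1, hy2⟩ := Submodule.mem_inf.1 hy
  obtain ⟨t, ht, z, hz, hyeq1⟩ := Submodule.mem_sup.1 hy1
  obtain ⟨a, rfl⟩ := Submodule.mem_span_singleton.1 hz
  obtain ⟨t', ht', z', hz', hyeq2⟩ := Submodule.mem_sup.1 hy2
  obtain ⟨a', rfl⟩ := Submodule.mem_span_singleton.1 hz'
  have h0 : (t + a • (w + c • u)) - (t' + a' • (w + c' • u)) = 0 := by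
    rw [hyeq1, hyeq2]; simp
  have haa : a = a' := by
    by_contra haa
    apply hw
    have e : (a - a') • w - ((t' - t) + (a' * c' - a * c) • u) =
        (t + a • (w + c • u)) - (t' + a' • (w + c' • u)) := by module
    have h1 : (a - a') • w = (t' - t) + (a' * c' - a * c) • u :=
      sub_eq_zero.1 (e.trans h0)
    have h2 : (a - a') • w ∈ WPi := by
      rw [h1]
      exact WPi.add_mem (WPi.sub_mem (htPi ht') (htPi ht)) (WPi.smul_mem _ hu)
    exact (Submodule.smul_mem_iff _ (sub_ne_zero.2 haa)).1 h2
  subst haa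
  rcases eq_or_ne a 0 with rfl | ha
  · rw [← hyeq1]; simpa using ht
  · exfalso
    apply huτ
    have e : (t - t') - (a * (c' - c)) • u =
        (t + a • (w + c • u)) - (t' + a • (w + c' • u)) := by module
    have he : t - t' = (a * (c' - c)) • u := sub_eq_zero.1 (e.trans h0)
    have hne : a * (c' - c) ≠ 0 := mul_ne_zero ha (sub_ne_zero.2 (Ne.symm hcc))
    have hueq : u = (a * (c' - c))⁻¹ • (t - t') := by
      rw [he, smul_smul, inv_mul_cancel₀ hne, one_smul]
    rw [hueq]
    exact Wτ.smul_mem _ (Wτ.sub_mem ht ht')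

end solids

end Stmt13Aux

namespace Stmt13Aux
set_option linter.unusedSectionVars false
open Submodule Module
variable {F : Type} [Field F] [Fintype F]

lemma exists_four {α : Type*} {s : Set α} (hs : s.Finite) (h : 4 ≤ s.ncard) :
    ∃ p₁ p₂ p₃ p₄, p₁ ∈ s ∧ p₂ ∈ s ∧ p₃ ∈ s ∧ p₄ ∈ s ∧
      p₁ ≠ p₂ ∧ p₁ ≠ p₃ ∧ p₁ ≠ p₄ ∧ p₂ ≠ p₃ ∧ p₂ ≠ p₄ ∧ p₃ ≠ p₄ := by
  have hne : s.Nonempty := by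
    rw [← Set.ncard_pos hs]; omega
  obtain ⟨p₁, hp1⟩ := hne
  have h3 : 2 < (s \ {p₁}).ncard := by
    rw [Set.ncard_diff_singleton_of_mem hp1]; omega
  obtain ⟨p₂, hm2, p₃, hm3, p₄, hm4, h23, h24, h34⟩ :=
    (Set.two_lt_ncard hs.diff).1 h3
  exact ⟨p₁, p₂, p₃, p₄, hp1, hm2.1, hm3.1, hm4.1,
    fun h => hm2.2 (by simp [← h]), fun h => hm3.2 (by simp [← h]),
    fun h => hm4.2 (by simp [← h]), h23, h24, h34⟩

lemma range_pair {α : Type*} (v₁ v₂ : α) : Set.range ![v₁, v₂] = {v₁, v₂} := by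
  ext x
  constructor
  · rintro ⟨i, rfl⟩
    fin_cases i <;> simp
  · rintro (rfl | rfl)
    · exact ⟨0, rfl⟩
    · exact ⟨1, rfl⟩

lemma range_triple {α : Type*} (v₁ v₂ v₃ : α) :
    Set.range ![v₁, v₂, v₃] = {v₁, v₂, v₃} := by
  ext x
  constructor
  · rintro ⟨i, rfl⟩
    fin_cases i <;> simp
  · rintro (rfl | rfl | rfl)
    · exact ⟨0, rfl⟩
    · exact ⟨1, rfl⟩
    · exact ⟨2, rfl⟩

lemma finrank_span_range {k : ℕ} {v : Fin k → Fin 5 → F} (li : LinearIndependent F v) :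
    Module.finrank F (Submodule.span F (Set.range v)) = k := by
  rw [finrank_span_eq_card li, Fintype.card_fin]

lemma indep_insert {v₁ v₂ x : Fin 5 → F} (h12 : LinearIndependent F ![v₁, v₂])
    (hx : x ∉ Submodule.span F (Set.range ![v₁, v₂])) :
    LinearIndependent F ![v₁, v₂, x] := by
  rw [Fintype.linearIndependent_iff]
  intro g hg
  have hsum : g 0 • v₁ + g 1 • v₂ + g 2 • x = 0 := by
    rw [← hg, Fin.sum_univ_succ, Fin.sum_univ_succ, Fin.sum_univ_succ, Fin.sum_univ_zero]
    show _ = g 0 • v₁ + (g 1 • v₂ + (g 2 • x + 0))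
    module
  have hg2 : g 2 = 0 := by
    by_contra hg2
    apply hx
    have hx' : x = (-(g 2)⁻¹ * g 0) • v₁ + (-(g 2)⁻¹ * g 1) • v₂ := by
      have e : (g 2)⁻¹ • (g 0 • v₁ + g 1 • v₂ + g 2 • x) =
          ((g 2)⁻¹ * g 0) • v₁ + ((g 2)⁻¹ * g 1) • v₂ + ((g 2)⁻¹ * g 2) • x := by module
      rw [hsum, smul_zero] at e
      rw [inv_mul_cancel₀ hg2, one_smul] at e
      have := e.symm
      linear_combination (norm := module) this
    rw [hx']
    have hm1 : v₁ ∈ Submodule.span F (Set.range ![v₁, v₂]) :=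
      Submodule.subset_span ⟨0, rfl⟩
    have hm2 : v₂ ∈ Submodule.span F (Set.range ![v₁, v₂]) :=
      Submodule.subset_span ⟨1, rfl⟩
    exact Submodule.add_mem _ (Submodule.smul_mem _ _ hm1) (Submodule.smul_mem _ _ hm2)
  have hsum2 : g 0 • v₁ + g 1 • v₂ = 0 := by
    rw [hg2, zero_smul, add_zero] at hsum
    exact hsum
  have h01 := Fintype.linearIndependent_iff.1 h12 ![g 0, g 1] (by
    rw [Fin.sum_univ_succ, Fin.sum_univ_succ, Fin.sum_univ_zero]
    show g 0 • v₁ + (g 1 • v₂ + 0) = 0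
    rw [add_zero]; exact hsum2)
  intro i
  fin_cases i
  · exact h01 0
  · exact h01 1
  · exact hg2

lemma pair_indep_of_points {p p' : PGPt F 4} {v v' : Fin 5 → F}
    (hv : p.submodule = Submodule.span F {v}) (hv' : p'.submodule = Submodule.span F {v'})
    (hvne : v ≠ 0) (hv'ne : v' ≠ 0) (hne : p ≠ p') : LinearIndependent F ![v, v'] := by
  rw [LinearIndependent.pair_iff' hvne]
  intro a ha
  apply hne
  apply eq_of_submodule_eq
  have hane : a ≠ 0 := by
    intro h
    rw [h, zero_smul] at ha
    exact hv'ne ha.symm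
  rw [hv, hv', ← ha, Submodule.span_singleton_smul_eq (IsUnit.mk0 a hane) _]

end Stmt13Aux



namespace Stmt13Aux
set_option linter.unusedSectionVars false
set_option maxHeartbeats 1000000
open Submodule Module
variable {F : Type} [Field F] [Fintype F]

lemma key_contra {q : ℕ} (hq : Fintype.card F = q) (h5 : 5 ≤ q) {K : Set (PGPt F 4)}
    (hK : K.ncard = q ^ 2 + 2 * q + 1) (hyp : EightTypeHyp F K)
    (hnoT7 : ∀ Pi, IsSolid F Pi → ¬TypeConicTwoLines F K Pi)
    {WPi Wl : Submodule F (Fin 5 → F)}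
    (hWPi4 : Module.finrank F WPi = 4) (hWl2 : Module.finrank F Wl = 2)
    {f : (Fin 4 → F) →ₗ[F] (Fin 5 → F)} (hf : Function.Injective f)
    (hsec : K ∩ pts WPi = pts Wl ∪ cubicSet f)
    {Wτ : Submodule F (Fin 5 → F)} (hτ3 : Module.finrank F Wτ = 3) (hτPi : Wτ ≤ WPi)
    {P₁ P₂ P₃ : PGPt F 4}
    (hc1 : P₁ ∈ cubicSet f) (hc2 : P₂ ∈ cubicSet f) (hc3 : P₃ ∈ cubicSet f)
    (hl1 : P₁ ∉ pts Wl) (hl2 : P₂ ∉ pts Wl) (hl3 : P₃ ∉ pts Wl)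
    (h12 : P₁ ≠ P₂) (h13 : P₁ ≠ P₃) (h23 : P₂ ≠ P₃)
    (hτ1 : P₁.submodule ≤ Wτ) (hτ2 : P₂.submodule ≤ Wτ) (hτ3' : P₃.submodule ≤ Wτ)
    (hτmax : cubicSet f ∩ pts Wτ ⊆ {P₁, P₂, P₃})
    (hlτ : ¬ Wl ≤ Wτ) : False := by
  classical
  have hq5 : 5 ≤ Fintype.card F := by rw [hq]; exact h5
  have hunionK : pts Wl ∪ cubicSet f ⊆ K ∩ pts WPi := hsec.superset
  have hlPi : Wl ≤ WPi := le_of_pts_subset (fun p hp => (hunionK (Or.inl hp)).2)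
  -- the intersection point X of the line with the plane τ
  have hinf_rank : Module.finrank F ↥(Wl ⊓ Wτ) = 1 := by
    have hsup : Wl ⊔ Wτ ≤ WPi := sup_le hlPi hτPi
    have h1 : Module.finrank F ↥(Wl ⊔ Wτ) ≤ 4 := hWPi4 ▸ Submodule.finrank_mono hsup
    have h2 := Submodule.finrank_sup_add_finrank_inf_eq Wl Wτ
    have h3 : Module.finrank F ↥(Wl ⊓ Wτ) ≤ 2 := hWl2 ▸ Submodule.finrank_mono inf_le_left
    rw [hWl2, hτ3] at h2
    rcases (by omega : Module.finrank F ↥(Wl ⊓ Wτ) = 1 ∨ Module.finrank F ↥(Wl ⊓ Wτ) = 2)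
      with h | h
    · exact h
    · exfalso
      have he : Wl ⊓ Wτ = Wl :=
        Submodule.eq_of_le_of_finrank_le inf_le_left (by omega)
      exact hlτ (he ▸ inf_le_right)
  obtain ⟨x, hx0⟩ : ∃ x : ↥(Wl ⊓ Wτ), x ≠ 0 := by
    have : Nontrivial ↥(Wl ⊓ Wτ) :=
      Module.nontrivial_of_finrank_pos (R := F) (by omega)
    exact exists_ne 0
  set xv : Fin 5 → F := (x : Fin 5 → F) with hxv
  have hxne : xv ≠ 0 := fun h => hx0 (Subtype.ext h)
  have hxl : xv ∈ Wl := (Submodule.mem_inf.1 x.2).1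
  have hxτ : xv ∈ Wτ := (Submodule.mem_inf.1 x.2).2
  have hspanx : Wl ⊓ Wτ = Submodule.span F {xv} := by
    symm
    apply Submodule.eq_of_le_of_finrank_le
    · rw [Submodule.span_le]
      intro y hy
      rw [Set.mem_singleton_iff] at hy
      subst hy
      exact Submodule.mem_inf.2 ⟨hxl, hxτ⟩
    · rw [hinf_rank, finrank_span_singleton hxne]
  set X : PGPt F 4 := Projectivization.mk F xv hxne with hX
  have hXsub : X.submodule = Submodule.span F {xv} := Projectivization.submodule_mk _ _
  have hXl : X ∈ pts Wl := mk_mem_pts hxne hxl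
  have hXτ : X ∈ pts Wτ := mk_mem_pts hxne hxτ
  have hXK : X ∈ K := (hunionK (Or.inl hXl)).1
  have hK1 : P₁ ∈ K := (hunionK (Or.inr hc1)).1
  have hK2 : P₂ ∈ K := (hunionK (Or.inr hc2)).1
  have hK3 : P₃ ∈ K := (hunionK (Or.inr hc3)).1
  have hXP1 : X ≠ P₁ := fun h => hl1 (h ▸ hXl)
  have hXP2 : X ≠ P₂ := fun h => hl2 (h ▸ hXl)
  have hXP3 : X ≠ P₃ := fun h => hl3 (h ▸ hXl)
  set Q4 : Set (PGPt F 4) := {X, P₁, P₂, P₃} with hQ4def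
  have hQ4K : Q4 ⊆ K := by
    intro p hp
    simp only [hQ4def, Set.mem_insert_iff, Set.mem_singleton_iff] at hp
    rcases hp with rfl | rfl | rfl | rfl <;> assumption
  have hQ4τ : Q4 ⊆ pts Wτ := by
    intro p hp
    simp only [hQ4def, Set.mem_insert_iff, Set.mem_singleton_iff] at hp
    rcases hp with rfl | rfl | rfl | rfl
    · exact hXτ
    · exact hτ1
    · exact hτ2
    · exact hτ3'
  have hQ4Pi : Q4 ⊆ pts WPi := fun p hp => pts_mono hτPi (hQ4τ hp)
  have hQ4card : Q4.ncard = 4 := by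
    rw [hQ4def]
    rw [Set.ncard_insert_of_notMem (by simp [hXP1, hXP2, hXP3]),
      Set.ncard_insert_of_notMem (by simp [h12, h13]),
      Set.ncard_insert_of_notMem (by simp [h23]), Set.ncard_singleton]
  -- auxiliary vectors for the pencil of solids through τ
  have hnotPi : ¬ WPi ≤ Wτ := by
    intro h
    have := Submodule.finrank_mono (M := Fin 5 → F) h
    rw [hWPi4, hτ3] at this
    omega
  obtain ⟨u, hu, huτ⟩ := SetLike.not_le_iff_exists.1 hnotPi
  obtain ⟨w, hw⟩ := exists_not_mem_of_finrank_lt (W := WPi) (by omega)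
  set Wc : F → Submodule F (Fin 5 → F) :=
    fun c => Wτ ⊔ Submodule.span F {w + c • u} with hWc
  have hτWc : ∀ c, Wτ ≤ Wc c := fun c => le_sup_left
  have hsolid : ∀ c, IsSolid F (pts (Wc c)) :=
    fun c => ⟨Wc c, by simpa using Wc_finrank hτ3 hu hw hτPi c, rfl⟩
  have hKint : ∀ c, K ∩ pts (Wc c) ∩ pts WPi ⊆ Q4 := by
    intro c p hp
    obtain ⟨⟨hpK, hpc⟩, hpPi⟩ := hp
    have hpτ : p.submodule ≤ Wτ :=
      le_trans (le_inf hpc hpPi) (Wc_inter_Pi hu huτ hw hτPi c)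
    have hpKPi : p ∈ K ∩ pts WPi := ⟨hpK, hpPi⟩
    rw [hsec] at hpKPi
    rcases hpKPi with hpl | hpN
    · have h1 : p.submodule ≤ Submodule.span F {xv} := hspanx ▸ le_inf hpl hpτ
      have h2 : p.submodule = Submodule.span F {xv} := by
        apply Submodule.eq_of_le_of_finrank_le h1
        simp [finrank_span_singleton hxne, Projectivization.finrank_submodule]
      exact Set.mem_insert_iff.2 (Or.inl (eq_of_submodule_eq (h2.trans hXsub.symm)))
    · exact Set.mem_insert_of_mem _ (hτmax ⟨hpN, hpτ⟩)
  -- the per-solid estimate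
  have hbound : ∀ c : F, 2 * q ≤ ((K ∩ pts (Wc c)) \ pts WPi).ncard + 4 := by
    intro c
    have hQ4sub : Q4 ⊆ K ∩ pts (Wc c) :=
      fun p hp => ⟨hQ4K hp, pts_mono (hτWc c) (hQ4τ hp)⟩
    rcases hyp (pts (Wc c)) (hsolid c) with hT | hT | hT | hT | hT | hT | hT | hT
    · -- one line
      exfalso
      obtain ⟨L, hL, hsecc⟩ := hT
      have hsub : L ⊆ K ∩ pts (Wc c) := hsecc.superset
      have hone : (Q4 ∩ L).ncard ≤ 1 :=
        inter_line_le_one hL hQ4Pi (le_of_eq hQ4card) hsub (hKint c) hq5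
      have he : Q4 ∩ L = Q4 := Set.inter_eq_self_of_subset_left (hsecc ▸ hQ4sub)
      rw [he, hQ4card] at hone
      omega
    · -- two lines
      exfalso
      obtain ⟨L, M, hL, hM, hLM, hsecc⟩ := hT
      have hsubL : L ⊆ K ∩ pts (Wc c) := hsecc ▸ Set.subset_union_left
      have hsubM : M ⊆ K ∩ pts (Wc c) := hsecc ▸ Set.subset_union_right
      have honeL := inter_line_le_one hL hQ4Pi (le_of_eq hQ4card) hsubL (hKint c) hq5
      have honeM := inter_line_le_one hM hQ4Pi (le_of_eq hQ4card) hsubM (hKint c) hq5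
      have hcover : Q4 = (Q4 ∩ L) ∪ (Q4 ∩ M) := by
        rw [← Set.inter_union_distrib_left]
        exact (Set.inter_eq_self_of_subset_left (hsecc ▸ hQ4sub)).symm
      have hun := Set.ncard_union_le (Q4 ∩ L) (Q4 ∩ M)
      rw [← hcover, hQ4card] at hun
      omega
    · -- three lines
      exfalso
      obtain ⟨L, M, N', hL, hM, hN, hLM, hLN, hMN, hsecc⟩ := hT
      have hsubL : L ⊆ K ∩ pts (Wc c) := hsecc ▸ (Set.subset_union_left.trans Set.subset_union_left)
      have hsubM : M ⊆ K ∩ pts (Wc c) := hsecc ▸ (Set.subset_union_right.trans Set.subset_union_left)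
      have hsubN : N' ⊆ K ∩ pts (Wc c) := hsecc ▸ Set.subset_union_right
      have honeL := inter_line_le_one hL hQ4Pi (le_of_eq hQ4card) hsubL (hKint c) hq5
      have honeM := inter_line_le_one hM hQ4Pi (le_of_eq hQ4card) hsubM (hKint c) hq5
      have honeN := inter_line_le_one hN hQ4Pi (le_of_eq hQ4card) hsubN (hKint c) hq5
      have hcover : Q4 = (Q4 ∩ L) ∪ (Q4 ∩ M) ∪ (Q4 ∩ N') := by
        rw [← Set.inter_union_distrib_left, ← Set.inter_union_distrib_left]
        exact (Set.inter_eq_self_of_subset_left (hsecc ▸ hQ4sub)).symm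
      have hun1 := Set.ncard_union_le ((Q4 ∩ L) ∪ (Q4 ∩ M)) (Q4 ∩ N')
      have hun2 := Set.ncard_union_le (Q4 ∩ L) (Q4 ∩ M)
      rw [← hcover, hQ4card] at hun1
      omega
    · -- line and conic
      exfalso
      obtain ⟨L, C, hL, hC, hsecc⟩ := hT
      obtain ⟨g, hg, hCeq⟩ := hC
      have hC' : C = conicSet g := hCeq
      have hsubL : L ⊆ K ∩ pts (Wc c) := hsecc ▸ Set.subset_union_left
      have hsubC : conicSet g ⊆ K ∩ pts (Wc c) := by
        rw [← hC']
        exact hsecc ▸ Set.subset_union_right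
      have honeL := inter_line_le_one hL hQ4Pi (le_of_eq hQ4card) hsubL (hKint c) hq5
      have hcover : Q4 = (Q4 ∩ L) ∪ (Q4 ∩ conicSet g) := by
        rw [← Set.inter_union_distrib_left, ← hC']
        exact (Set.inter_eq_self_of_subset_left (hsecc ▸ hQ4sub)).symm
      have hun := Set.ncard_union_le (Q4 ∩ L) (Q4 ∩ conicSet g)
      rw [← hcover, hQ4card] at hun
      have h3C : 2 < (Q4 ∩ conicSet g).ncard := by omega
      obtain ⟨r₁, hr1, r₂, hr2, r₃, hr3, hr12, hr13, hr23⟩ :=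
        (Set.two_lt_ncard (Set.toFinite _)).1 h3C
      have hCτ : conicSet g ⊆ pts Wτ :=
        conic_subset_of_three hg hτ3 hr1.2 hr2.2 hr3.2 hr12 hr13 hr23
          (hQ4τ hr1.1) (hQ4τ hr2.1) (hQ4τ hr3.1)
      have hfin : conicSet g ⊆ Q4 := fun p hp =>
        hKint c ⟨hsubC hp, pts_mono hτPi (hCτ hp)⟩
      have hle4 : (conicSet g).ncard ≤ 4 := by
        have h44 := Set.ncard_le_ncard hfin (Set.toFinite _)
        omega
      have hge := conic_ncard_ge hg
      omega
    · -- twisted cubic alone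
      exfalso
      obtain ⟨C, hC, hsecc⟩ := hT
      obtain ⟨g, hg, hCeq⟩ := hC
      have hC' : C = cubicSet g := hCeq
      have hsubQ : Q4 ⊆ cubicSet g := by
        rw [← hC', ← hsecc]
        exact hQ4sub
      have hfour := four_cubic_le_finrank hg
        (hsubQ (by simp [hQ4def])) (hsubQ (by simp [hQ4def]))
        (hsubQ (by simp [hQ4def])) (hsubQ (by simp [hQ4def]))
        hXP1 hXP2 hXP3 h12 h13 h23
        (hQ4τ (by simp [hQ4def])) (hQ4τ (by simp [hQ4def]))
        (hQ4τ (by simp [hQ4def])) (hQ4τ (by simp [hQ4def]))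
      omega
    · -- single point
      exfalso
      obtain ⟨P, hsecc⟩ := hT
      have h1 : X ∈ ({P} : Set (PGPt F 4)) := hsecc ▸ hQ4sub (by simp [hQ4def])
      have h2 : P₁ ∈ ({P} : Set (PGPt F 4)) := hsecc ▸ hQ4sub (by simp [hQ4def])
      rw [Set.mem_singleton_iff] at h1 h2
      exact hXP1 (h1.trans h2.symm)
    · -- conic and two lines : excluded
      exact absurd hT (hnoT7 _ (hsolid c))
    · -- line and twisted cubic : the only possible case
      obtain ⟨L, C, hL, hC, hsecc⟩ := hT
      obtain ⟨WL, hWL2, hLeq⟩ := hL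
      obtain ⟨g, hg, hCeq⟩ := hC
      have hL' : L = pts WL := hLeq
      have hC' : C = cubicSet g := hCeq
      rw [hL', hC'] at hsecc
      have hint2 : (cubicSet g ∩ pts WL).ncard ≤ 2 := cubic_inter_le_two hg hWL2 hq5
      have hcomm : (pts WL ∩ cubicSet g).ncard ≤ 2 := by
        rw [Set.inter_comm]; exact hint2
      have hLn : q + 1 ≤ (pts WL).ncard := hq ▸ pts_ncard_ge hWL2
      have hCn : q + 1 ≤ (cubicSet g).ncard := hq ▸ cubic_ncard_ge hg
      have hun := Set.ncard_union_add_ncard_inter (pts WL) (cubicSet g)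
      have h2q : 2 * q ≤ (K ∩ pts (Wc c)).ncard := by
        rw [hsecc]
        omega
      have hsplit : K ∩ pts (Wc c) ⊆ ((K ∩ pts (Wc c)) \ pts WPi) ∪ Q4 := by
        intro p hp
        by_cases hpPi : p ∈ pts WPi
        · exact Or.inr (hKint c ⟨hp, hpPi⟩)
        · exact Or.inl ⟨hp, hpPi⟩
      have hsp := Set.ncard_le_ncard hsplit (Set.toFinite _)
      have hle := Set.ncard_union_le ((K ∩ pts (Wc c)) \ pts WPi) Q4
      rw [hQ4card] at hle
      omega
  -- the global count
  have hKPicard : 2 * q ≤ (K ∩ pts WPi).ncard := by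
    rw [hsec]
    have h1 : q + 1 ≤ (pts Wl).ncard := hq ▸ pts_ncard_ge hWl2
    have h2 : q + 1 ≤ (cubicSet f).ncard := hq ▸ cubic_ncard_ge hf
    have h3 : (pts Wl ∩ cubicSet f).ncard ≤ 2 := by
      rw [Set.inter_comm]; exact cubic_inter_le_two hf hWl2 hq5
    have hun := Set.ncard_union_add_ncard_inter (pts Wl) (cubicSet f)
    omega
  set D : Set (PGPt F 4) := K \ pts WPi with hD
  have hDcard : D.ncard ≤ q ^ 2 + 1 := by
    have h1 := Set.ncard_inter_add_ncard_diff_eq_ncard K (pts WPi)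
    rw [hK] at h1
    rw [← hD] at h1
    omega
  set A : F → Set (PGPt F 4) := fun c => (K ∩ pts (Wc c)) \ pts WPi with hA
  have hAD : ∀ c, A c ⊆ D := fun c p hp => ⟨hp.1.1, hp.2⟩
  have hdisj : ∀ c c', c ≠ c' → Disjoint (A c) (A c') := by
    intro c c' hcc
    rw [Set.disjoint_left]
    rintro p ⟨⟨hpK, hpc⟩, hpPi⟩ ⟨⟨hpK', hpc'⟩, hpPi'⟩
    apply hpPi
    exact mem_pts.2 (le_trans (le_trans (le_inf hpc hpc')
      (Wc_inter_Wc hu huτ hw hτPi hcc)) hτPi)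
  set t : F → Finset (PGPt F 4) := fun c => (Set.toFinite (A c)).toFinset with ht
  have hcardsum : ∑ c : F, (A c).ncard ≤ D.ncard := by
    have hbi : (Finset.univ.biUnion t).card = ∑ c : F, (t c).card := by
      apply Finset.card_biUnion
      intro c _ c' _ hcc
      show Disjoint (t c) (t c')
      rw [ht]
      rw [Set.Finite.disjoint_toFinset]
      exact hdisj c c' hcc
    have hsub : Finset.univ.biUnion t ⊆ (Set.toFinite D).toFinset := by
      intro p hp
      rw [Finset.mem_biUnion] at hp
      obtain ⟨c, _, hc⟩ := hp
      rw [Set.Finite.mem_toFinset] at hc ⊢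
      exact hAD c hc
    have hcard := Finset.card_le_card hsub
    rw [hbi] at hcard
    calc ∑ c : F, (A c).ncard = ∑ c : F, (t c).card := by
          apply Finset.sum_congr rfl
          intro c _
          rw [ht, Set.ncard_eq_toFinset_card]
      _ ≤ ((Set.toFinite D).toFinset).card := hcard
      _ = D.ncard := (Set.ncard_eq_toFinset_card _ _).symm
  have hsum2 : (Fintype.card F) * (2 * q) ≤ (∑ c : F, (A c).ncard) + (Fintype.card F) * 4 := by
    calc (Fintype.card F) * (2 * q) = ∑ _c : F, 2 * q := by
          rw [Finset.sum_const, smul_eq_mul, Finset.card_univ]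
      _ ≤ ∑ c : F, ((A c).ncard + 4) := Finset.sum_le_sum (fun c _ => hbound c)
      _ = (∑ c : F, (A c).ncard) + (Fintype.card F) * 4 := by
          rw [Finset.sum_add_distrib, Finset.sum_const, smul_eq_mul, Finset.card_univ]
  rw [hq] at hsum2
  have e1 : q * (2 * q) = 2 * (q * q) := by ring
  have hq2 : q ^ 2 = q * q := sq q
  have h5q : 5 * q ≤ q * q := Nat.mul_le_mul_right q h5
  omega

end Stmt13Aux


/-- if no 3-space meets `K` in a conic plus two lines, then no 3-space
meets `K` in a line together with a twisted cubic. -/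
theorem stmt13 (q : ℕ) (hq : Fintype.card F = q) (h5 : 5 ≤ q) (K : Set (PGPt F 4))
    (hK : K.ncard = q ^ 2 + 2 * q + 1) (hyp : EightTypeHyp F K)
    (hnoT7 : ∀ Pi, IsSolid F Pi → ¬TypeConicTwoLines F K Pi) :
    ∀ Pi, IsSolid F Pi → ¬TypeLineTwistedCubic F K Pi := by
  classical
  intro Pi hPi hT8
  obtain ⟨l, C, hl, hC, hsec0⟩ := hT8
  obtain ⟨WPi, hWPi4', hPiEq⟩ := hPi
  obtain ⟨Wl, hWl2', hlEq⟩ := hl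
  obtain ⟨f, hf, hCEq⟩ := hC
  subst hPiEq hlEq hCEq
  open Stmt13Aux in
  have hWPi4 : Module.finrank F WPi = 4 := by omega
  have hWl2 : Module.finrank F Wl = 2 := by omega
  have hsec : K ∩ Stmt13Aux.pts WPi = Stmt13Aux.pts Wl ∪ Stmt13Aux.cubicSet f := hsec0
  clear hsec0
  have hq5 : 5 ≤ Fintype.card F := by rw [hq]; exact h5
  -- four distinct points of the cubic, not on the line
  have hNl : (Stmt13Aux.cubicSet f ∩ Stmt13Aux.pts Wl).ncard ≤ 2 :=
    Stmt13Aux.cubic_inter_le_two hf hWl2 hq5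
  have hNn : q + 1 ≤ (Stmt13Aux.cubicSet f).ncard := hq ▸ Stmt13Aux.cubic_ncard_ge hf
  have hdiffcard : 4 ≤ (Stmt13Aux.cubicSet f \ Stmt13Aux.pts Wl).ncard := by
    have hdiffeq : Stmt13Aux.cubicSet f \ Stmt13Aux.pts Wl =
        Stmt13Aux.cubicSet f \ (Stmt13Aux.cubicSet f ∩ Stmt13Aux.pts Wl) := by
      ext p
      simp only [Set.mem_diff, Set.mem_inter_iff, not_and]
      tauto
    rw [hdiffeq, Set.ncard_diff Set.inter_subset_left (Set.toFinite _)]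
    omega
  obtain ⟨P₁, P₂, P₃, P₄, m1, m2, m3, m4, d12, d13, d14, d23, d24, d34⟩ :=
    Stmt13Aux.exists_four (Set.toFinite _) hdiffcard
  obtain ⟨a₁, b₁, h01, hp1⟩ := m1.1
  obtain ⟨a₂, b₂, h02, hp2⟩ := m2.1
  obtain ⟨a₃, b₃, h03, hp3⟩ := m3.1
  obtain ⟨a₄, b₄, h04, hp4⟩ := m4.1
  set w₁ : Fin 5 → F := f (Stmt13Aux.v4 a₁ b₁) with hw1
  set w₂ : Fin 5 → F := f (Stmt13Aux.v4 a₂ b₂) with hw2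
  set w₃ : Fin 5 → F := f (Stmt13Aux.v4 a₃ b₃) with hw3
  set w₄ : Fin 5 → F := f (Stmt13Aux.v4 a₄ b₄) with hw4
  have hp1' : P₁.submodule = Submodule.span F {w₁} := hp1
  have hp2' : P₂.submodule = Submodule.span F {w₂} := hp2
  have hp3' : P₃.submodule = Submodule.span F {w₃} := hp3
  have hp4' : P₄.submodule = Submodule.span F {w₄} := hp4
  have hw1ne : w₁ ≠ 0 := Stmt13Aux.f_ne_zero hf (Stmt13Aux.v4_ne_zero h01)
  have hw2ne : w₂ ≠ 0 := Stmt13Aux.f_ne_zero hf (Stmt13Aux.v4_ne_zero h02)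
  have hunionK : Stmt13Aux.pts Wl ∪ Stmt13Aux.cubicSet f ⊆ K ∩ Stmt13Aux.pts WPi :=
    hsec.superset
  have hwPi : ∀ (P : PGPt F 4) (v : Fin 5 → F), P ∈ Stmt13Aux.cubicSet f →
      P.submodule = Submodule.span F {v} → v ∈ WPi := by
    intro P v hP hPv
    exact Stmt13Aux.vec_mem_of_le hPv (hunionK (Or.inr hP)).2
  have hw1Pi : w₁ ∈ WPi := hwPi P₁ w₁ m1.1 hp1'
  have hw2Pi : w₂ ∈ WPi := hwPi P₂ w₂ m2.1 hp2'
  have hw3Pi : w₃ ∈ WPi := hwPi P₃ w₃ m3.1 hp3'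
  have hw4Pi : w₄ ∈ WPi := hwPi P₄ w₄ m4.1 hp4'
  -- pairwise non-proportionality of the parameters
  have n12 : a₁ * b₂ - a₂ * b₁ ≠ 0 := Stmt13Aux.cubic_param_nonprop h01 h02 hp1 hp2 d12
  have n13 : a₁ * b₃ - a₃ * b₁ ≠ 0 := Stmt13Aux.cubic_param_nonprop h01 h03 hp1 hp3 d13
  have n14 : a₁ * b₄ - a₄ * b₁ ≠ 0 := Stmt13Aux.cubic_param_nonprop h01 h04 hp1 hp4 d14
  have n23 : a₂ * b₃ - a₃ * b₂ ≠ 0 := Stmt13Aux.cubic_param_nonprop h02 h03 hp2 hp3 d23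
  have n24 : a₂ * b₄ - a₄ * b₂ ≠ 0 := Stmt13Aux.cubic_param_nonprop h02 h04 hp2 hp4 d24
  -- the two candidate planes
  set T3 : Submodule F (Fin 5 → F) := Submodule.span F (Set.range ![w₁, w₂, w₃]) with hT3
  set T4 : Submodule F (Fin 5 → F) := Submodule.span F (Set.range ![w₁, w₂, w₄]) with hT4
  have li123 : LinearIndependent F ![w₁, w₂, w₃] := by
    have h := Stmt13Aux.indep_map hf
      (Stmt13Aux.indep_v4_three h01 h02 h03 n12 n13 n23 hq5)
    have e : (fun i => f (![Stmt13Aux.v4 a₁ b₁, Stmt13Aux.v4 a₂ b₂, Stmt13Aux.v4 a₃ b₃] i)) =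
        ![w₁, w₂, w₃] := by
      funext i
      fin_cases i <;> rfl
    rwa [e] at h
  have li124 : LinearIndependent F ![w₁, w₂, w₄] := by
    have h := Stmt13Aux.indep_map hf
      (Stmt13Aux.indep_v4_three h01 h02 h04 n12 n14 n24 hq5)
    have e : (fun i => f (![Stmt13Aux.v4 a₁ b₁, Stmt13Aux.v4 a₂ b₂, Stmt13Aux.v4 a₄ b₄] i)) =
        ![w₁, w₂, w₄] := by
      funext i
      fin_cases i <;> rfl
    rwa [e] at h
  have fr123 : Module.finrank F T3 = 3 := Stmt13Aux.finrank_span_range li123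
  have fr124 : Module.finrank F T4 = 3 := Stmt13Aux.finrank_span_range li124
  have hw1T3 : w₁ ∈ T3 := Submodule.subset_span ⟨0, rfl⟩
  have hw2T3 : w₂ ∈ T3 := Submodule.subset_span ⟨1, rfl⟩
  have hw3T3 : w₃ ∈ T3 := Submodule.subset_span ⟨2, rfl⟩
  have hw1T4 : w₁ ∈ T4 := Submodule.subset_span ⟨0, rfl⟩
  have hw2T4 : w₂ ∈ T4 := Submodule.subset_span ⟨1, rfl⟩
  have hw4T4 : w₄ ∈ T4 := Submodule.subset_span ⟨2, rfl⟩
  have hsub1T3 : P₁.submodule ≤ T3 := by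
    rw [hp1']; exact (Submodule.span_singleton_le_iff_mem _ _).2 hw1T3
  have hsub2T3 : P₂.submodule ≤ T3 := by
    rw [hp2']; exact (Submodule.span_singleton_le_iff_mem _ _).2 hw2T3
  have hsub3T3 : P₃.submodule ≤ T3 := by
    rw [hp3']; exact (Submodule.span_singleton_le_iff_mem _ _).2 hw3T3
  have hsub1T4 : P₁.submodule ≤ T4 := by
    rw [hp1']; exact (Submodule.span_singleton_le_iff_mem _ _).2 hw1T4
  have hsub2T4 : P₂.submodule ≤ T4 := by
    rw [hp2']; exact (Submodule.span_singleton_le_iff_mem _ _).2 hw2T4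
  have hsub4T4 : P₄.submodule ≤ T4 := by
    rw [hp4']; exact (Submodule.span_singleton_le_iff_mem _ _).2 hw4T4
  have hT3Pi : T3 ≤ WPi := by
    rw [hT3, Submodule.span_le, Stmt13Aux.range_triple]
    rintro y (rfl | rfl | rfl) <;> assumption
  have hT4Pi : T4 ≤ WPi := by
    rw [hT4, Submodule.span_le, Stmt13Aux.range_triple]
    rintro y (rfl | rfl | rfl) <;> assumption
  have hmax3 : Stmt13Aux.cubicSet f ∩ Stmt13Aux.pts T3 ⊆ {P₁, P₂, P₃} := by
    rintro p ⟨hpC, hpτ⟩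
    by_contra hnot
    simp only [Set.mem_insert_iff, Set.mem_singleton_iff, not_or] at hnot
    have h4 := Stmt13Aux.four_cubic_le_finrank hf m1.1 m2.1 m3.1 hpC d12 d13
      (fun h => hnot.1 h.symm) d23 (fun h => hnot.2.1 h.symm) (fun h => hnot.2.2 h.symm)
      hsub1T3 hsub2T3 hsub3T3 hpτ
    omega
  have hmax4 : Stmt13Aux.cubicSet f ∩ Stmt13Aux.pts T4 ⊆ {P₁, P₂, P₄} := by
    rintro p ⟨hpC, hpτ⟩
    by_contra hnot
    simp only [Set.mem_insert_iff, Set.mem_singleton_iff, not_or] at hnot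
    have h4 := Stmt13Aux.four_cubic_le_finrank hf m1.1 m2.1 m4.1 hpC d12 d14
      (fun h => hnot.1 h.symm) d24 (fun h => hnot.2.1 h.symm) (fun h => hnot.2.2 h.symm)
      hsub1T4 hsub2T4 hsub4T4 hpτ
    omega
  by_cases hcase : Wl ≤ T3
  · -- then the line is not inside T4
    have hlτ4 : ¬ Wl ≤ T4 := by
      intro hle4
      have li12 : LinearIndependent F ![w₁, w₂] :=
        Stmt13Aux.pair_indep_of_points hp1' hp2' hw1ne hw2ne d12
      have h12span : ¬ Wl ≤ Submodule.span F (Set.range ![w₁, w₂]) := by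
        intro hle
        have fr12 : Module.finrank F (Submodule.span F (Set.range ![w₁, w₂])) = 2 :=
          Stmt13Aux.finrank_span_range li12
        have heq : Wl = Submodule.span F (Set.range ![w₁, w₂]) :=
          Submodule.eq_of_le_of_finrank_le hle (by rw [fr12, hWl2])
        have hw1l : w₁ ∈ Wl := heq ▸ Submodule.subset_span ⟨0, rfl⟩
        exact m1.2 (Stmt13Aux.mem_pts.2
          (hp1' ▸ (Submodule.span_singleton_le_iff_mem _ _).2 hw1l))
      obtain ⟨xx, hxxl, hxx12⟩ := SetLike.not_le_iff_exists.1 h12span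
      have li12x : LinearIndependent F ![w₁, w₂, xx] := Stmt13Aux.indep_insert li12 hxx12
      have fr12x : Module.finrank F (Submodule.span F (Set.range ![w₁, w₂, xx])) = 3 :=
        Stmt13Aux.finrank_span_range li12x
      have hsub3 : Submodule.span F (Set.range ![w₁, w₂, xx]) ≤ T3 := by
        rw [Submodule.span_le, Stmt13Aux.range_triple]
        rintro y (rfl | rfl | rfl)
        · exact hw1T3
        · exact hw2T3
        · exact hcase hxxl
      have hsub4 : Submodule.span F (Set.range ![w₁, w₂, xx]) ≤ T4 := by
        rw [Submodule.span_le, Stmt13Aux.range_triple]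
        rintro y (rfl | rfl | rfl)
        · exact hw1T4
        · exact hw2T4
        · exact hle4 hxxl
      have he3 : Submodule.span F (Set.range ![w₁, w₂, xx]) = T3 :=
        Submodule.eq_of_le_of_finrank_le hsub3 (by rw [fr123, fr12x])
      have he4 : Submodule.span F (Set.range ![w₁, w₂, xx]) = T4 :=
        Submodule.eq_of_le_of_finrank_le hsub4 (by rw [fr124, fr12x])
      have hw4T3 : w₄ ∈ T3 := by
        rw [← he3, he4]
        exact hw4T4
      have hsub4T3 : P₄.submodule ≤ T3 := by
        rw [hp4']; exact (Submodule.span_singleton_le_iff_mem _ _).2 hw4T3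
      have h4 := Stmt13Aux.four_cubic_le_finrank hf m1.1 m2.1 m3.1 m4.1 d12 d13 d14 d23 d24 d34
        hsub1T3 hsub2T3 hsub3T3 hsub4T3
      omega
    exact Stmt13Aux.key_contra hq h5 hK hyp hnoT7 hWPi4 hWl2 hf hsec fr124 hT4Pi
      m1.1 m2.1 m4.1 m1.2 m2.2 m4.2 d12 d14 d24 hsub1T4 hsub2T4 hsub4T4 hmax4 hlτ4
  · exact Stmt13Aux.key_contra hq h5 hK hyp hnoT7 hWPi4 hWl2 hf hsec fr123 hT3Pi
      m1.1 m2.1 m3.1 m1.2 m2.2 m3.2 d12 d13 d23 hsub1T3 hsub2T3 hsub3T3 hmax3 hcase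
end

section
/- Let K be a set of q^2+2q+1 points in PG(4,q), q ≥ 3, satisfying the 3-space intersection hypotheses, with sticks m_0,...,m_q and baseline b. Suppose K contained the q+1 sticks and no other line. Then a contradiction follows; in particular, for any point X on a stick m and any other stick m', counting points of K in the 3-spaces through the plane ⟨X, m'⟩ yields |K| = q^2+q+2 ≠ q^2+2q+1. -/
open Projectivization

variable (F : Type) [Field F] [Fintype F]

section Aux
variable {F}

lemma aux_mem_set_of_le {n : ℕ} (W : Submodule F (Fin (n+1) → F)) {v : Fin (n+1) → F}
    (hv : v ≠ 0) (hvW : v ∈ W) :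
    (Projectivization.mk F v hv).submodule ≤ W := by
  rw [Projectivization.submodule_mk]
  exact (Submodule.span_singleton_le_iff_mem v W).2 hvW

lemma aux_exists_nz {n : ℕ} (W : Submodule F (Fin n → F)) (h : 1 ≤ Module.finrank F W) :
    ∃ v ∈ W, v ≠ 0 := by
  refine (Submodule.ne_bot_iff W).1 ?_
  rintro rfl
  rw [finrank_bot] at h
  omega

lemma aux_inter_unique (W L : Submodule F (Fin 5 → F)) (hW : Module.finrank F W = 2)
    (hL : Module.finrank F L = 2) (hne : W ≠ L) {p p' : PGPt F 4}
    (h1 : p.submodule ≤ W) (h2 : p.submodule ≤ L) (h3 : p'.submodule ≤ W)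
    (h4 : p'.submodule ≤ L) : p = p' := by
  have hI : Module.finrank F ↥(W ⊓ L) ≤ 1 := by
    by_contra h
    push_neg at h
    have h5 : W ⊓ L = W := Submodule.eq_of_le_of_finrank_le inf_le_left (by omega)
    have hWL : W ≤ L := h5 ▸ inf_le_right
    exact hne (Submodule.eq_of_le_of_finrank_le hWL (by omega))
  have e1 : p.submodule = W ⊓ L :=
    Submodule.eq_of_le_of_finrank_le (le_inf h1 h2) (by rw [p.finrank_submodule]; exact hI)
  have e2 : p'.submodule = W ⊓ L :=
    Submodule.eq_of_le_of_finrank_le (le_inf h3 h4) (by rw [p'.finrank_submodule]; exact hI)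
  exact Projectivization.submodule_injective (e1.trans e2.symm)

lemma aux_line_points {q : ℕ} (hq : Fintype.card F = q) (h3 : 3 ≤ q)
    (W : Submodule F (Fin 5 → F)) (hW : Module.finrank F W = 2) :
    ∃ p1 p2 p3 p4 : PGPt F 4, p1 ≠ p2 ∧ p1 ≠ p3 ∧ p1 ≠ p4 ∧ p2 ≠ p3 ∧ p2 ≠ p4 ∧ p3 ≠ p4 ∧
      p1.submodule ≤ W ∧ p2.submodule ≤ W ∧ p3.submodule ≤ W ∧ p4.submodule ≤ W := by
  classical
  obtain ⟨c, hc0, hc1⟩ : ∃ c : F, c ≠ 0 ∧ c ≠ 1 := by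
    by_contra h
    push_neg at h
    have hsub : (Finset.univ : Finset F) ⊆ {0, 1} := by
      intro x _
      simp only [Finset.mem_insert, Finset.mem_singleton]
      rcases eq_or_ne x 0 with h0 | h0
      · exact Or.inl h0
      · exact Or.inr (h x h0)
    have hcard := Finset.card_le_card hsub
    rw [Finset.card_univ, hq] at hcard
    have h2 : ({0, 1} : Finset F).card ≤ 2 :=
      (Finset.card_insert_le _ _).trans (by simp)
    omega
  let B := Module.finBasisOfFinrankEq F W hW
  set u : Fin 5 → F := ((B 0 : W) : Fin 5 → F) with hu
  set v : Fin 5 → F := ((B 1 : W) : Fin 5 → F) with hv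
  have huW : u ∈ W := (B 0).2
  have hvW : v ∈ W := (B 1).2
  have hind : ∀ s t : F, s • u + t • v = 0 → s = 0 ∧ t = 0 := by
    have hli : LinearIndependent F (fun i => ((B i : W) : Fin 5 → F)) :=
      B.linearIndependent.map' W.subtype W.ker_subtype
    intro s t hst
    have hsum : ∑ i : Fin 2, (![s, t] : Fin 2 → F) i • ((B i : W) : Fin 5 → F) = 0 := by
      rw [Fin.sum_univ_two]
      simp only [Matrix.cons_val_zero, Matrix.cons_val_one, Matrix.head_cons]
      exact hst
    have := Fintype.linearIndependent_iff.1 hli ![s, t] hsum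
    exact ⟨this 0, this 1⟩
  have hune : u ≠ 0 := by
    intro h
    have := hind 1 0 (by simp [h])
    simpa using this.1
  have hvne : v ≠ 0 := by
    intro h
    have := hind 0 1 (by simp [h])
    simpa using this.2
  have huv : u + v ≠ 0 := by
    intro h
    have := hind 1 1 (by simpa using h)
    simpa using this.1
  have hucv : u + c • v ≠ 0 := by
    intro h
    have := hind 1 c (by simpa using h)
    simpa using this.1
  refine ⟨Projectivization.mk F u hune, Projectivization.mk F v hvne,
    Projectivization.mk F (u + v) huv, Projectivization.mk F (u + c • v) hucv,
    ?_, ?_, ?_, ?_, ?_, ?_,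
    aux_mem_set_of_le W hune huW, aux_mem_set_of_le W hvne hvW,
    aux_mem_set_of_le W huv (W.add_mem huW hvW),
    aux_mem_set_of_le W hucv (W.add_mem huW (W.smul_mem c hvW))⟩
  · intro hmk
    rw [Projectivization.mk_eq_mk_iff'] at hmk
    obtain ⟨a, ha⟩ := hmk
    have h := hind 1 (-a) (by linear_combination (norm := module) -ha)
    norm_num at h
  · intro hmk
    rw [Projectivization.mk_eq_mk_iff'] at hmk
    obtain ⟨a, ha⟩ := hmk
    have h := hind (a - 1) a (by linear_combination (norm := module) ha)
    rw [h.2] at h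
    norm_num at h
  · intro hmk
    rw [Projectivization.mk_eq_mk_iff'] at hmk
    obtain ⟨a, ha⟩ := hmk
    have h := hind (a - 1) (a * c) (by linear_combination (norm := module) ha)
    have ha1 : a = 1 := sub_eq_zero.1 h.1
    rw [ha1, one_mul] at h
    exact hc0 h.2
  · intro hmk
    rw [Projectivization.mk_eq_mk_iff'] at hmk
    obtain ⟨a, ha⟩ := hmk
    have h := hind a (a - 1) (by linear_combination (norm := module) ha)
    rw [h.1] at h
    norm_num at h
  · intro hmk
    rw [Projectivization.mk_eq_mk_iff'] at hmk
    obtain ⟨a, ha⟩ := hmk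
    have h := hind a (a * c - 1) (by linear_combination (norm := module) ha)
    rw [h.1, zero_mul] at h
    norm_num at h
  · intro hmk
    rw [Projectivization.mk_eq_mk_iff'] at hmk
    obtain ⟨a, ha⟩ := hmk
    have h := hind (a - 1) (a * c - 1) (by linear_combination (norm := module) ha)
    have ha1 : a = 1 := sub_eq_zero.1 h.1
    rw [ha1, one_mul] at h
    exact hc1 (sub_eq_zero.1 h.2)

lemma aux_exists_scale (a1 b1 a2 b2 : F) (h1 : a1 ≠ 0 ∨ b1 ≠ 0) (h2 : a2 ≠ 0 ∨ b2 ≠ 0)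
    (h : a1 * b2 - a2 * b1 = 0) : ∃ l : F, l ≠ 0 ∧ a1 = l * a2 ∧ b1 = l * b2 := by
  obtain ⟨l, ha, hb⟩ : ∃ l : F, a1 = l * a2 ∧ b1 = l * b2 := by
    rcases h2 with h2 | h2
    · refine ⟨a1 / a2, by field_simp, ?_⟩
      field_simp
      linear_combination -h
    · refine ⟨b1 / b2, ?_, by field_simp⟩
      field_simp
      linear_combination h
  refine ⟨l, ?_, ha, hb⟩
  rintro rfl
  rw [zero_mul] at ha hb
  rcases h1 with h1 | h1
  · exact h1 ha
  · exact h1 hb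

lemma aux_vdm3 (a1 b1 a2 b2 a3 b3 : F) (h12 : a1 * b2 - a2 * b1 ≠ 0)
    (h13 : a1 * b3 - a3 * b1 ≠ 0) (h23 : a2 * b3 - a3 * b2 ≠ 0) :
    LinearIndependent F
      ![![a1 ^ 2, a1 * b1, b1 ^ 2], ![a2 ^ 2, a2 * b2, b2 ^ 2], ![a3 ^ 2, a3 * b3, b3 ^ 2]] := by
  have hdet : (Matrix.of
      ![![a1 ^ 2, a1 * b1, b1 ^ 2], ![a2 ^ 2, a2 * b2, b2 ^ 2], ![a3 ^ 2, a3 * b3, b3 ^ 2]]).det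
      = (a1 * b2 - a2 * b1) * ((a1 * b3 - a3 * b1) * (a2 * b3 - a3 * b2)) := by
    rw [Matrix.det_fin_three]
    simp [Matrix.of_apply]
    ring
  have hunit : IsUnit (Matrix.of
      ![![a1 ^ 2, a1 * b1, b1 ^ 2], ![a2 ^ 2, a2 * b2, b2 ^ 2], ![a3 ^ 2, a3 * b3, b3 ^ 2]]) := by
    rw [Matrix.isUnit_iff_isUnit_det, hdet, isUnit_iff_ne_zero]
    exact mul_ne_zero h12 (mul_ne_zero h13 h23)
  exact Matrix.linearIndependent_rows_iff_isUnit.2 hunit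

lemma aux_vdm4 (a1 b1 a2 b2 a3 b3 a4 b4 : F) (h12 : a1 * b2 - a2 * b1 ≠ 0)
    (h13 : a1 * b3 - a3 * b1 ≠ 0) (h14 : a1 * b4 - a4 * b1 ≠ 0)
    (h23 : a2 * b3 - a3 * b2 ≠ 0) (h24 : a2 * b4 - a4 * b2 ≠ 0)
    (h34 : a3 * b4 - a4 * b3 ≠ 0) :
    LinearIndependent F
      ![![a1 ^ 3, a1 ^ 2 * b1, a1 * b1 ^ 2, b1 ^ 3], ![a2 ^ 3, a2 ^ 2 * b2, a2 * b2 ^ 2, b2 ^ 3],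
        ![a3 ^ 3, a3 ^ 2 * b3, a3 * b3 ^ 2, b3 ^ 3], ![a4 ^ 3, a4 ^ 2 * b4, a4 * b4 ^ 2, b4 ^ 3]] := by
  have hdet : (Matrix.of
      ![![a1 ^ 3, a1 ^ 2 * b1, a1 * b1 ^ 2, b1 ^ 3], ![a2 ^ 3, a2 ^ 2 * b2, a2 * b2 ^ 2, b2 ^ 3],
        ![a3 ^ 3, a3 ^ 2 * b3, a3 * b3 ^ 2, b3 ^ 3], ![a4 ^ 3, a4 ^ 2 * b4, a4 * b4 ^ 2, b4 ^ 3]]).det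
      = (a1 * b2 - a2 * b1) * ((a1 * b3 - a3 * b1) * ((a1 * b4 - a4 * b1) *
          ((a2 * b3 - a3 * b2) * ((a2 * b4 - a4 * b2) * (a3 * b4 - a4 * b3))))) := by
    have e1 : (1 : Fin 4).succAbove 2 = 3 := by decide
    have e2 : (2 : Fin 4).succAbove 2 = 3 := by decide
    have e3 : Fin.castSucc (2 : Fin 3) = 2 := by decide
    have e4 : (3 : Fin 4).succAbove 2 = 2 := by decide
    simp [Matrix.det_succ_row_zero, Fin.sum_univ_succ, e1, e2, e3, e4]
    ring
  have hunit : IsUnit (Matrix.of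
      ![![a1 ^ 3, a1 ^ 2 * b1, a1 * b1 ^ 2, b1 ^ 3], ![a2 ^ 3, a2 ^ 2 * b2, a2 * b2 ^ 2, b2 ^ 3],
        ![a3 ^ 3, a3 ^ 2 * b3, a3 * b3 ^ 2, b3 ^ 3], ![a4 ^ 3, a4 ^ 2 * b4, a4 * b4 ^ 2, b4 ^ 3]]) := by
    rw [Matrix.isUnit_iff_isUnit_det, hdet, isUnit_iff_ne_zero]
    exact mul_ne_zero h12 (mul_ne_zero h13 (mul_ne_zero h14
      (mul_ne_zero h23 (mul_ne_zero h24 h34))))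
  exact Matrix.linearIndependent_rows_iff_isUnit.2 hunit

lemma aux_conic_cross {k : ℕ} (g : (Fin 3 → F) →ₗ[F] (Fin k → F))
    (a1 b1 a2 b2 : F) (h1 : a1 ≠ 0 ∨ b1 ≠ 0) (h2 : a2 ≠ 0 ∨ b2 ≠ 0)
    (hspan : Submodule.span F {g ![a1 ^ 2, a1 * b1, b1 ^ 2]} ≠
      Submodule.span F {g ![a2 ^ 2, a2 * b2, b2 ^ 2]}) :
    a1 * b2 - a2 * b1 ≠ 0 := by
  intro h
  obtain ⟨l, hl, ha, hb⟩ := aux_exists_scale a1 b1 a2 b2 h1 h2 h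
  apply hspan
  have hv : (![a1 ^ 2, a1 * b1, b1 ^ 2] : Fin 3 → F) = l ^ 2 • ![a2 ^ 2, a2 * b2, b2 ^ 2] := by
    funext i
    fin_cases i <;> simp [ha, hb] <;> ring
  rw [hv, map_smul, Submodule.span_singleton_smul_eq (isUnit_iff_ne_zero.2 (pow_ne_zero 2 hl))]

lemma aux_cubic_cross {k : ℕ} (g : (Fin 4 → F) →ₗ[F] (Fin k → F))
    (a1 b1 a2 b2 : F) (h1 : a1 ≠ 0 ∨ b1 ≠ 0) (h2 : a2 ≠ 0 ∨ b2 ≠ 0)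
    (hspan : Submodule.span F {g ![a1 ^ 3, a1 ^ 2 * b1, a1 * b1 ^ 2, b1 ^ 3]} ≠
      Submodule.span F {g ![a2 ^ 3, a2 ^ 2 * b2, a2 * b2 ^ 2, b2 ^ 3]}) :
    a1 * b2 - a2 * b1 ≠ 0 := by
  intro h
  obtain ⟨l, hl, ha, hb⟩ := aux_exists_scale a1 b1 a2 b2 h1 h2 h
  apply hspan
  have hv : (![a1 ^ 3, a1 ^ 2 * b1, a1 * b1 ^ 2, b1 ^ 3] : Fin 4 → F)
      = l ^ 3 • ![a2 ^ 3, a2 ^ 2 * b2, a2 * b2 ^ 2, b2 ^ 3] := by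
    funext i
    fin_cases i <;> simp [ha, hb] <;> ring
  rw [hv, map_smul, Submodule.span_singleton_smul_eq (isUnit_iff_ne_zero.2 (pow_ne_zero 3 hl))]

end Aux

lemma aux_conic_contra (C : Set (PGPt F 4)) (hC : IsConic F 4 C)
    (W : Submodule F (Fin 5 → F)) (hW : Module.finrank F W = 2)
    {p1 p2 p3 : PGPt F 4} (h12 : p1 ≠ p2) (h13 : p1 ≠ p3) (h23 : p2 ≠ p3)
    (hc1 : p1 ∈ C) (hc2 : p2 ∈ C) (hc3 : p3 ∈ C)
    (hw1 : p1.submodule ≤ W) (hw2 : p2.submodule ≤ W) (hw3 : p3.submodule ≤ W) : False := by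
  obtain ⟨f, hf, hCdef⟩ := hC
  rw [hCdef] at hc1 hc2 hc3
  obtain ⟨a1, b1, hab1, hp1⟩ := hc1
  obtain ⟨a2, b2, hab2, hp2⟩ := hc2
  obtain ⟨a3, b3, hab3, hp3⟩ := hc3
  have hs12 : a1 * b2 - a2 * b1 ≠ 0 := aux_conic_cross f a1 b1 a2 b2 hab1 hab2
    (by rw [← hp1, ← hp2]; exact fun h => h12 (Projectivization.submodule_injective h))
  have hs13 : a1 * b3 - a3 * b1 ≠ 0 := aux_conic_cross f a1 b1 a3 b3 hab1 hab3
    (by rw [← hp1, ← hp3]; exact fun h => h13 (Projectivization.submodule_injective h))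
  have hs23 : a2 * b3 - a3 * b2 ≠ 0 := aux_conic_cross f a2 b2 a3 b3 hab2 hab3
    (by rw [← hp2, ← hp3]; exact fun h => h23 (Projectivization.submodule_injective h))
  have hli := (aux_vdm3 a1 b1 a2 b2 a3 b3 hs12 hs13 hs23).map' f (LinearMap.ker_eq_bot.2 hf)
  have hr := finrank_span_eq_card hli
  have hle : Submodule.span F (Set.range
      (f ∘ ![![a1 ^ 2, a1 * b1, b1 ^ 2], ![a2 ^ 2, a2 * b2, b2 ^ 2],
        ![a3 ^ 2, a3 * b3, b3 ^ 2]])) ≤ W := by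
    rw [Submodule.span_le]
    rintro x ⟨i, rfl⟩
    fin_cases i
    · exact (Submodule.span_singleton_le_iff_mem _ _).1 (hp1 ▸ hw1)
    · exact (Submodule.span_singleton_le_iff_mem _ _).1 (hp2 ▸ hw2)
    · exact (Submodule.span_singleton_le_iff_mem _ _).1 (hp3 ▸ hw3)
  have hmono := Submodule.finrank_mono hle
  rw [hr, hW] at hmono
  simp at hmono

lemma aux_cubic_contra (C : Set (PGPt F 4)) (hC : IsTwistedCubic F 4 C)
    (W : Submodule F (Fin 5 → F)) (hW : Module.finrank F W = 2)
    {p1 p2 p3 p4 : PGPt F 4} (h12 : p1 ≠ p2) (h13 : p1 ≠ p3) (h14 : p1 ≠ p4)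
    (h23 : p2 ≠ p3) (h24 : p2 ≠ p4) (h34 : p3 ≠ p4)
    (hc1 : p1 ∈ C) (hc2 : p2 ∈ C) (hc3 : p3 ∈ C) (hc4 : p4 ∈ C)
    (hw1 : p1.submodule ≤ W) (hw2 : p2.submodule ≤ W) (hw3 : p3.submodule ≤ W)
    (hw4 : p4.submodule ≤ W) : False := by
  obtain ⟨f, hf, hCdef⟩ := hC
  rw [hCdef] at hc1 hc2 hc3 hc4
  obtain ⟨a1, b1, hab1, hp1⟩ := hc1
  obtain ⟨a2, b2, hab2, hp2⟩ := hc2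
  obtain ⟨a3, b3, hab3, hp3⟩ := hc3
  obtain ⟨a4, b4, hab4, hp4⟩ := hc4
  have hs12 : a1 * b2 - a2 * b1 ≠ 0 := aux_cubic_cross f a1 b1 a2 b2 hab1 hab2
    (by rw [← hp1, ← hp2]; exact fun h => h12 (Projectivization.submodule_injective h))
  have hs13 : a1 * b3 - a3 * b1 ≠ 0 := aux_cubic_cross f a1 b1 a3 b3 hab1 hab3
    (by rw [← hp1, ← hp3]; exact fun h => h13 (Projectivization.submodule_injective h))
  have hs14 : a1 * b4 - a4 * b1 ≠ 0 := aux_cubic_cross f a1 b1 a4 b4 hab1 hab4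
    (by rw [← hp1, ← hp4]; exact fun h => h14 (Projectivization.submodule_injective h))
  have hs23 : a2 * b3 - a3 * b2 ≠ 0 := aux_cubic_cross f a2 b2 a3 b3 hab2 hab3
    (by rw [← hp2, ← hp3]; exact fun h => h23 (Projectivization.submodule_injective h))
  have hs24 : a2 * b4 - a4 * b2 ≠ 0 := aux_cubic_cross f a2 b2 a4 b4 hab2 hab4
    (by rw [← hp2, ← hp4]; exact fun h => h24 (Projectivization.submodule_injective h))
  have hs34 : a3 * b4 - a4 * b3 ≠ 0 := aux_cubic_cross f a3 b3 a4 b4 hab3 hab4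
    (by rw [← hp3, ← hp4]; exact fun h => h34 (Projectivization.submodule_injective h))
  have hli := (aux_vdm4 a1 b1 a2 b2 a3 b3 a4 b4 hs12 hs13 hs14 hs23 hs24 hs34).map' f
    (LinearMap.ker_eq_bot.2 hf)
  have hr := finrank_span_eq_card hli
  have hle : Submodule.span F (Set.range
      (f ∘ ![![a1 ^ 3, a1 ^ 2 * b1, a1 * b1 ^ 2, b1 ^ 3],
        ![a2 ^ 3, a2 ^ 2 * b2, a2 * b2 ^ 2, b2 ^ 3],
        ![a3 ^ 3, a3 ^ 2 * b3, a3 * b3 ^ 2, b3 ^ 3],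
        ![a4 ^ 3, a4 ^ 2 * b4, a4 * b4 ^ 2, b4 ^ 3]])) ≤ W := by
    rw [Submodule.span_le]
    rintro x ⟨i, rfl⟩
    fin_cases i
    · exact (Submodule.span_singleton_le_iff_mem _ _).1 (hp1 ▸ hw1)
    · exact (Submodule.span_singleton_le_iff_mem _ _).1 (hp2 ▸ hw2)
    · exact (Submodule.span_singleton_le_iff_mem _ _).1 (hp3 ▸ hw3)
    · exact (Submodule.span_singleton_le_iff_mem _ _).1 (hp4 ▸ hw4)
  have hmono := Submodule.finrank_mono hle
  rw [hr, hW] at hmono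
  simp at hmono

lemma aux_pick3 {X : Type*} (P : X → Prop) (p1 p2 p3 p4 : X)
    (d12 : p1 ≠ p2) (d13 : p1 ≠ p3) (d14 : p1 ≠ p4) (d23 : p2 ≠ p3) (d24 : p2 ≠ p4)
    (d34 : p3 ≠ p4) (huniq : ∀ x y, P x → P y → x = y) :
    ∃ x y z, x ≠ y ∧ x ≠ z ∧ y ≠ z ∧ ¬P x ∧ ¬P y ∧ ¬P z ∧
      (x = p1 ∨ x = p2 ∨ x = p3 ∨ x = p4) ∧ (y = p1 ∨ y = p2 ∨ y = p3 ∨ y = p4) ∧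
      (z = p1 ∨ z = p2 ∨ z = p3 ∨ z = p4) := by
  classical
  by_cases hP1 : P p1
  · exact ⟨p2, p3, p4, d23, d24, d34,
      fun h => d12 (huniq _ _ hP1 h), fun h => d13 (huniq _ _ hP1 h),
      fun h => d14 (huniq _ _ hP1 h), by tauto, by tauto, by tauto⟩
  by_cases hP2 : P p2
  · exact ⟨p1, p3, p4, d13, d14, d34, hP1,
      fun h => d23 (huniq _ _ hP2 h), fun h => d24 (huniq _ _ hP2 h),
      by tauto, by tauto, by tauto⟩
  by_cases hP3 : P p3
  · exact ⟨p1, p2, p4, d12, d14, d24, hP1, hP2,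
      fun h => d34 (huniq _ _ hP3 h), by tauto, by tauto, by tauto⟩
  exact ⟨p1, p2, p3, d12, d13, d23, hP1, hP2, hP3, by tauto, by tauto, by tauto⟩

lemma aux_pick_index {q : ℕ} (h3 : 3 ≤ q) (j1 j2 j3 : Fin (q + 1)) :
    ∃ i, i ≠ j1 ∧ i ≠ j2 ∧ i ≠ j3 := by
  classical
  by_contra h
  push_neg at h
  have hsub : (Finset.univ : Finset (Fin (q + 1))) ⊆ {j1, j2, j3} := by
    intro i _
    simp only [Finset.mem_insert, Finset.mem_singleton]
    rcases eq_or_ne i j1 with h1 | h1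
    · exact Or.inl h1
    rcases eq_or_ne i j2 with h2 | h2
    · exact Or.inr (Or.inl h2)
    exact Or.inr (Or.inr (h i h1 h2))
  have hcard := Finset.card_le_card hsub
  rw [Finset.card_univ, Fintype.card_fin] at hcard
  have hc1 := Finset.card_insert_le j1 ({j2, j3} : Finset (Fin (q + 1)))
  have hc2 := Finset.card_insert_le j2 ({j3} : Finset (Fin (q + 1)))
  rw [Finset.card_singleton] at hc2
  omega


/-- if `K` consisted of the `q+1` pairwise skew sticks and contained
no other line, a contradiction follows. -/
theorem stmt18 (q : ℕ) (hq : Fintype.card F = q) (h3 : 3 ≤ q) (K : Set (PGPt F 4))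
    (hK : K.ncard = q ^ 2 + 2 * q + 1) (hyp : FiveTypeHyp F K)
    (m : Fin (q + 1) → Set (PGPt F 4))
    (hlines : ∀ i, IsLine F 4 (m i))
    (hdisj : ∀ i j, i ≠ j → Disjoint (m i) (m j))
    (hcover : (⋃ i, m i) = K)
    (hnoother : ∀ ℓ : Set (PGPt F 4), IsLine F 4 ℓ → ℓ ⊆ K → ∃ i, ℓ = m i) :
    False := by
  classical
  choose Wm hWrank hWset using hlines
  set i0 : Fin (q + 1) := ⟨0, by omega⟩ with hi0def
  set i1 : Fin (q + 1) := ⟨1, by omega⟩ with hi1def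
  have hi01 : i0 ≠ i1 := by
    intro h
    rw [hi0def, hi1def, Fin.mk.injEq] at h
    omega
  have hmem : ∀ (i : Fin (q + 1)) (p : PGPt F 4), p ∈ m i ↔ p.submodule ≤ Wm i := by
    intro i p
    rw [hWset i]
    exact Iff.rfl
  have hinf : Wm i0 ⊓ Wm i1 = ⊥ := by
    by_contra h
    obtain ⟨v, hv, hv0⟩ := (Submodule.ne_bot_iff _).1 h
    obtain ⟨hv1, hv2⟩ := Submodule.mem_inf.1 hv
    have h0 : Projectivization.mk F v hv0 ∈ m i0 := (hmem i0 _).2 (aux_mem_set_of_le _ hv0 hv1)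
    have h1 : Projectivization.mk F v hv0 ∈ m i1 := (hmem i1 _).2 (aux_mem_set_of_le _ hv0 hv2)
    exact Set.disjoint_left.1 (hdisj i0 i1 hi01) h0 h1
  have hrankU : Module.finrank F ↥(Wm i0 ⊔ Wm i1) = 4 := by
    have h := Submodule.finrank_sup_add_finrank_inf_eq (Wm i0) (Wm i1)
    rw [hinf, hWrank i0, hWrank i1] at h
    rw [finrank_bot] at h
    omega
  set Pi : Set (PGPt F 4) := {p | p.submodule ≤ Wm i0 ⊔ Wm i1} with hPidef
  have hPimem : ∀ p : PGPt F 4, p ∈ Pi ↔ p.submodule ≤ Wm i0 ⊔ Wm i1 := fun p => Iff.rfl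
  have hsolid : IsSolid F Pi := ⟨Wm i0 ⊔ Wm i1, by rw [hrankU], rfl⟩
  have hfin5 : Module.finrank F (Fin 5 → F) = 5 := Module.finrank_fin_fun F
  have hmeet : ∀ i : Fin (q + 1), ∃ p : PGPt F 4, p ∈ m i ∧ p ∈ Pi := by
    intro i
    have hsum := Submodule.finrank_sup_add_finrank_inf_eq (Wm i) (Wm i0 ⊔ Wm i1)
    have hle5 : Module.finrank F ↥(Wm i ⊔ (Wm i0 ⊔ Wm i1)) ≤ 5 :=
      hfin5 ▸ Submodule.finrank_le _
    rw [hWrank i, hrankU] at hsum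
    obtain ⟨v, hv, hv0⟩ := aux_exists_nz (Wm i ⊓ (Wm i0 ⊔ Wm i1)) (by omega)
    obtain ⟨hv1, hv2⟩ := Submodule.mem_inf.1 hv
    exact ⟨Projectivization.mk F v hv0, (hmem i _).2 (aux_mem_set_of_le _ hv0 hv1),
      (hPimem _).2 (aux_mem_set_of_le _ hv0 hv2)⟩
  have hsubK : ∀ i, m i ⊆ K := fun i => by rw [← hcover]; exact Set.subset_iUnion m i
  have hm0Pi : m i0 ⊆ Pi := fun p hp => (hPimem p).2 (le_trans ((hmem i0 p).1 hp) le_sup_left)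
  have hm1Pi : m i1 ⊆ Pi := fun p hp => (hPimem p).2 (le_trans ((hmem i1 p).1 hp) le_sup_right)
  have hne_stick : ∀ i, (m i).Nonempty := by
    intro i
    obtain ⟨v, hv, hv0⟩ := aux_exists_nz (Wm i) (by rw [hWrank i]; omega)
    exact ⟨Projectivization.mk F v hv0, (hmem i _).2 (aux_mem_set_of_le _ hv0 hv)⟩
  have hWne : ∀ i j, i ≠ j → Wm i ≠ Wm j := by
    intro i j hij h
    obtain ⟨p, hp⟩ := hne_stick i
    have hpj : p ∈ m j := (hmem j p).2 (h ▸ (hmem i p).1 hp)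
    exact Set.disjoint_left.1 (hdisj i j hij) hp hpj
  rcases hyp Pi hsolid with ⟨ℓ, hℓ, heq⟩ | ⟨ℓ, ℓ', hℓ, hℓ', hnell, heq⟩ |
    ⟨ℓ, ℓ', ℓ'', hℓ, hℓ', hℓ'', hne1, hne2, hne3, heq⟩ | ⟨ℓ, C, hℓ, hC, heq⟩ | ⟨C, hC, heq⟩
  · -- one line
    have hsubKl : ℓ ⊆ K := by rw [← heq]; exact Set.inter_subset_left
    obtain ⟨j, hj⟩ := hnoother ℓ hℓ hsubKl
    obtain ⟨i, hij, -, -⟩ := aux_pick_index h3 j j j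
    obtain ⟨p, hpm, hpPi⟩ := hmeet i
    have hpK : p ∈ K ∩ Pi := ⟨hsubK i hpm, hpPi⟩
    rw [heq, hj] at hpK
    exact Set.disjoint_left.1 (hdisj i j hij) hpm hpK
  · -- two lines
    have hKl : ℓ ⊆ K ∩ Pi := by rw [heq]; exact Set.subset_union_left
    have hKl' : ℓ' ⊆ K ∩ Pi := by rw [heq]; exact Set.subset_union_right
    obtain ⟨j1, hj1⟩ := hnoother ℓ hℓ (hKl.trans Set.inter_subset_left)
    obtain ⟨j2, hj2⟩ := hnoother ℓ' hℓ' (hKl'.trans Set.inter_subset_left)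
    obtain ⟨i, hij1, hij2, -⟩ := aux_pick_index h3 j1 j2 j2
    obtain ⟨p, hpm, hpPi⟩ := hmeet i
    have hpK : p ∈ ℓ ∪ ℓ' := by rw [← heq]; exact ⟨hsubK i hpm, hpPi⟩
    rcases hpK with hp | hp
    · exact Set.disjoint_left.1 (hdisj i j1 hij1) hpm (hj1 ▸ hp)
    · exact Set.disjoint_left.1 (hdisj i j2 hij2) hpm (hj2 ▸ hp)
  · -- three lines
    have hKl : ℓ ⊆ K ∩ Pi := by
      rw [heq]; exact Set.subset_union_left.trans Set.subset_union_left
    have hKl' : ℓ' ⊆ K ∩ Pi := by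
      rw [heq]; exact Set.subset_union_right.trans Set.subset_union_left
    have hKl'' : ℓ'' ⊆ K ∩ Pi := by rw [heq]; exact Set.subset_union_right
    obtain ⟨j1, hj1⟩ := hnoother ℓ hℓ (hKl.trans Set.inter_subset_left)
    obtain ⟨j2, hj2⟩ := hnoother ℓ' hℓ' (hKl'.trans Set.inter_subset_left)
    obtain ⟨j3, hj3⟩ := hnoother ℓ'' hℓ'' (hKl''.trans Set.inter_subset_left)
    obtain ⟨i, hij1, hij2, hij3⟩ := aux_pick_index h3 j1 j2 j3
    obtain ⟨p, hpm, hpPi⟩ := hmeet i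
    have hpK : p ∈ ℓ ∪ ℓ' ∪ ℓ'' := by rw [← heq]; exact ⟨hsubK i hpm, hpPi⟩
    rcases hpK with (hp | hp) | hp
    · exact Set.disjoint_left.1 (hdisj i j1 hij1) hpm (hj1 ▸ hp)
    · exact Set.disjoint_left.1 (hdisj i j2 hij2) hpm (hj2 ▸ hp)
    · exact Set.disjoint_left.1 (hdisj i j3 hij3) hpm (hj3 ▸ hp)
  · -- line and conic
    have hKl : ℓ ⊆ K := by
      intro x hx
      have hx2 : x ∈ K ∩ Pi := by rw [heq]; exact Or.inl hx
      exact hx2.1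
    obtain ⟨j, hj⟩ := hnoother ℓ hℓ hKl
    set k : Fin (q + 1) := if j = i0 then i1 else i0 with hkdef
    have hk01 : k = i0 ∨ k = i1 := by
      rw [hkdef]
      split <;> simp
    have hkj : k ≠ j := by
      rw [hkdef]
      split
      · rename_i h; rw [h]; exact hi01.symm
      · rename_i h; exact fun hh => h hh.symm
    have hWkj : Wm k ≠ Wm j := hWne k j hkj
    have hmkPi : m k ⊆ Pi := by
      rcases hk01 with h | h <;> rw [h]
      · exact hm0Pi
      · exact hm1Pi
    have hmkC : m k ⊆ ℓ ∪ C := by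
      intro x hx
      rw [← heq]
      exact ⟨hsubK k hx, hmkPi hx⟩
    obtain ⟨p1, p2, p3, p4, d12, d13, d14, d23, d24, d34, w1, w2, w3, w4⟩ :=
      aux_line_points hq h3 (Wm k) (hWrank k)
    have hlmem : ∀ p : PGPt F 4, p ∈ ℓ → p.submodule ≤ Wm j := by
      intro p hp
      rw [hj, hWset j] at hp
      exact hp
    have huniq : ∀ x y : PGPt F 4, (x ∈ ℓ ∧ x.submodule ≤ Wm k) →
        (y ∈ ℓ ∧ y.submodule ≤ Wm k) → x = y := by
      intro x y hx hy
      exact aux_inter_unique (Wm k) (Wm j) (hWrank k) (hWrank j) hWkj hx.2 (hlmem x hx.1)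
        hy.2 (hlmem y hy.1)
    obtain ⟨x, y, z, dxy, dxz, dyz, hnx, hny, hnz, hxc, hyc, hzc⟩ :=
      aux_pick3 (fun p => p ∈ ℓ ∧ p.submodule ≤ Wm k) p1 p2 p3 p4 d12 d13 d14 d23 d24 d34 huniq
    have hxW : x.submodule ≤ Wm k := by rcases hxc with rfl | rfl | rfl | rfl <;> assumption
    have hyW : y.submodule ≤ Wm k := by rcases hyc with rfl | rfl | rfl | rfl <;> assumption
    have hzW : z.submodule ≤ Wm k := by rcases hzc with rfl | rfl | rfl | rfl <;> assumption
    have hxC : x ∈ C := by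
      rcases hmkC ((hmem k x).2 hxW) with h | h
      · exact absurd ⟨h, hxW⟩ hnx
      · exact h
    have hyC : y ∈ C := by
      rcases hmkC ((hmem k y).2 hyW) with h | h
      · exact absurd ⟨h, hyW⟩ hny
      · exact h
    have hzC : z ∈ C := by
      rcases hmkC ((hmem k z).2 hzW) with h | h
      · exact absurd ⟨h, hzW⟩ hnz
      · exact h
    exact aux_conic_contra F C hC (Wm k) (hWrank k) dxy dxz dyz hxC hyC hzC hxW hyW hzW
  · -- twisted cubic
    obtain ⟨p1, p2, p3, p4, d12, d13, d14, d23, d24, d34, w1, w2, w3, w4⟩ :=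
      aux_line_points hq h3 (Wm i0) (hWrank i0)
    have hmm : ∀ p : PGPt F 4, p.submodule ≤ Wm i0 → p ∈ C := by
      intro p hp
      have hpK : p ∈ K ∩ Pi := ⟨hsubK i0 ((hmem i0 p).2 hp),
        (hPimem p).2 (le_trans hp le_sup_left)⟩
      rw [heq] at hpK
      exact hpK
    exact aux_cubic_contra F C hC (Wm i0) (hWrank i0) d12 d13 d14 d23 d24 d34
      (hmm _ w1) (hmm _ w2) (hmm _ w3) (hmm _ w4) w1 w2 w3 w4
end
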